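/- Let G and H be finite simple graphs with vertex sets V and W and adjacency matrices A and B. Then hom(T,G) = hom(T,H) holds for every tree T if and only if there exists an entrywise nonnegative real matrix X ∈ ℝ^{V×W} satisfying AX = XB, X·𝟙_W = 𝟙_V, and 𝟙_V^T·X = 𝟙_W^T (i.e., G and H are fractionally isomorphic). -/

import Mathlib

open Matrix

open Matrix Finset
set_option linter.unusedSectionVars false
set_option maxHeartbeats 1000000

/-- Rooted forests: `cons t f` is the forest whose first tree has child-forest `t`,
followed by forest `f`. -/
inductive RF : Type where
  | nil : RF
  | cons : RF → RF → RF

namespace RF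

def app : RF → RF → RF
  | .nil, g => g
  | .cons t f, g => .cons t (app f g)

instance : Monoid RF where
  one := .nil
  mul := app
  one_mul _ := rfl
  mul_one f := by
    induction f with
    | nil => rfl
    | cons t f iht ihf => show app _ _ = _; simp only [app]; exact congrArg _ ihf
  mul_assoc f g h := by
    induction f with
    | nil => rfl
    | cons t f iht ihf => show app (app _ _) _ = app _ (app _ _); simp only [app]; exact congrArg _ ihf

lemma one_def : (1 : RF) = .nil := rfl
lemma mul_def (f g : RF) : f * g = app f g := rfl

def depth : RF → ℕ
  | .nil => 0
  | .cons t f => max (t.depth + 1) f.depth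

lemma depth_mul (f g : RF) : (f * g).depth = max f.depth g.depth := by
  induction f with
  | nil => simp [mul_def, app, depth]
  | cons t f iht ihf =>
      show depth (.cons t (app f g)) = _
      simp only [depth]
      rw [show app f g = f * g from rfl, ihf]
      simp [depth, max_assoc]

end RF

section HomF

variable {β : Type*} [Fintype β] (G : SimpleGraph β) [DecidableRel G.Adj]

/-- Number of homomorphisms of the tree with child-forest `f` sending the root to `v`. -/
def homF : RF → β → ℕ
  | .nil, _ => 1
  | .cons t f, v => (∑ u ∈ G.neighborFinset v, homF t u) * homF f v

lemma homF_one (v : β) : homF G 1 v = 1 := rfl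

lemma homF_mul (f g : RF) (v : β) : homF G (f * g) v = homF G f v * homF G g v := by
  induction f with
  | nil => simp [RF.mul_def, RF.app, homF]
  | cons t f iht ihf =>
      show homF G (.cons t (RF.app f g)) v = _
      simp only [homF]
      rw [show RF.app f g = f * g from rfl, ihf]
      ring

end HomF

/-- The type of Weisfeiler-Leman colors after `k` rounds. -/
def Col : ℕ → Type
  | 0 => Unit
  | k+1 => Col k × Multiset (Col k)

def colDecEq : ∀ k, DecidableEq (Col k)
  | 0 => inferInstanceAs (DecidableEq Unit)
  | k+1 => letI := colDecEq k; inferInstanceAs (DecidableEq (Col k × Multiset (Col k)))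

instance {k : ℕ} : DecidableEq (Col k) := colDecEq k

instance : Subsingleton (Col 0) := inferInstanceAs (Subsingleton Unit)

section WL

variable {β : Type*} [Fintype β] (G : SimpleGraph β) [DecidableRel G.Adj]

/-- The Weisfeiler-Leman (color refinement) coloring after `k` rounds. -/
def wl : (k : ℕ) → β → Col k
  | 0, _ => ()
  | k+1, v => (wl k v, (G.neighborFinset v).val.map (wl k))

lemma wl_succ (k : ℕ) (v : β) :
    wl G (k+1) v = (wl G k v, (G.neighborFinset v).val.map (wl G k)) := rfl

end WL

section Congr

lemma map_eq_map_of_fiber {α γ δ : Type*} [Nonempty δ] {m₁ m₂ : Multiset α} {c : α → γ}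
    (h : m₁.map c = m₂.map c) {f : α → δ} (hf : ∀ x y, c x = c y → f x = f y) :
    m₁.map f = m₂.map f := by
  classical
  set φ : γ → δ := fun col => if h : ∃ y, c y = col then f h.choose else Classical.arbitrary δ
    with hφ
  have key : ∀ x, f x = φ (c x) := by
    intro x
    have hex : ∃ y, c y = c x := ⟨x, rfl⟩
    simp only [hφ, dif_pos hex]
    exact hf x hex.choose (hex.choose_spec.symm)
  calc m₁.map f = (m₁.map c).map φ := by
        rw [Multiset.map_map]; exact Multiset.map_congr rfl (fun x _ => key x)
    _ = (m₂.map c).map φ := by rw [h]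
    _ = m₂.map f := by
        rw [Multiset.map_map]; exact Multiset.map_congr rfl (fun x _ => (key x).symm)

variable {β : Type*} [Fintype β] (G : SimpleGraph β) [DecidableRel G.Adj]

lemma homF_congr : ∀ (f : RF) (k : ℕ), f.depth ≤ k → ∀ v w : β,
    wl G k v = wl G k w → homF G f v = homF G f w := by
  intro f
  induction f with
  | nil => intros; rfl
  | cons t g iht ihg =>
      intro k hd v w hc
      cases k with
      | zero => simp [RF.depth] at hd
      | succ m =>
          have hd1 : t.depth ≤ m := by
            have := le_trans (le_max_left _ _) hd; omega
          have hd2 : g.depth ≤ m + 1 := le_trans (le_max_right _ _) hd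
          have hfst : wl G m v = wl G m w := congrArg Prod.fst hc
          have hsnd : (G.neighborFinset v).val.map (wl G m)
              = (G.neighborFinset w).val.map (wl G m) := congrArg Prod.snd hc
          simp only [homF]
          rw [ihg (m+1) hd2 v w hc]
          congr 1
          rw [Finset.sum_eq_multiset_sum, Finset.sum_eq_multiset_sum]
          rw [map_eq_map_of_fiber hsnd (fun x y hxy => iht m hd1 x y hxy)]

/-- Forests of depth at most `k`, as a submonoid of the forest monoid. -/
def RFle (k : ℕ) : Submonoid RF where
  carrier := {f | f.depth ≤ k}
  one_mem' := by simp only [Set.mem_setOf_eq, RF.one_def]; show RF.depth .nil ≤ k; simp [RF.depth]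
  mul_mem' := by
    intro a b ha hb
    simp only [Set.mem_setOf_eq, RF.depth_mul] at *
    exact max_le ha hb

/-- The character of a vertex: the monoid homomorphism sending a bounded-depth forest to
its rooted homomorphism count at that vertex. -/
def chr (x : β) (k : ℕ) : RFle k →* ℚ where
  toFun f := (homF G f.1 x : ℚ)
  map_one' := by norm_num [homF_one]
  map_mul' f g := by
    show ((homF G ((f : RF) * (g : RF)) x : ℚ)) = _
    rw [homF_mul]; push_cast; ring

lemma chr_eq_of_wl {x y : β} {k : ℕ} (h : wl G k x = wl G k y) : chr G x k = chr G y k := by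
  ext f
  show ((homF G f.1 x : ℚ)) = ((homF G f.1 y : ℚ))
  exact_mod_cast congrArg (Nat.cast (R := ℚ)) (homF_congr G f.1 k f.2 x y h)

lemma wl_eq_of_chr : ∀ (k : ℕ) (v w : β), chr G v k = chr G w k → wl G k v = wl G k w := by
  intro k
  induction k with
  | zero => intro v w _; rfl
  | succ m ih =>
      intro v w h
      have hmono : ∀ (x y : β), chr G x (m+1) = chr G y (m+1) → chr G x m = chr G y m := by
        intro x y hxy
        ext f
        have : (⟨f.1, le_trans f.2 (Nat.le_succ m)⟩ : RFle (m+1)) = ⟨f.1, _⟩ := rfl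
        exact DFunLike.congr_fun hxy ⟨f.1, le_trans f.2 (Nat.le_succ m)⟩
      have h1 : wl G m v = wl G m w := ih v w (hmono v w h)
      have hne : Nonempty β := ⟨v⟩
      -- the multiset of neighbor colors
      set L := (G.neighborFinset v).val.map (wl G m) with hL
      set R := (G.neighborFinset w).val.map (wl G m) with hR
      suffices hLR : L = R by
        show (wl G m v, L) = (wl G m w, R)
        rw [h1, hLR]
      classical
      -- representatives
      set rep : Col m → β := fun c => if h : ∃ x, wl G m x = c then h.choose else Classical.arbitrary β
        with hrep
      have hrep_spec : ∀ c : Col m, (∃ x, wl G m x = c) → wl G m (rep c) = c := by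
        intro c hc; simp only [hrep, dif_pos hc]; exact hc.choose_spec
      set χ : Col m → (RFle m →* ℚ) := fun c => chr G (rep c) m with hχ
      have hχx : ∀ x : β, chr G x m = χ (wl G m x) := by
        intro x
        exact chr_eq_of_wl G ((hrep_spec _ ⟨x, rfl⟩).symm)
      set S : Finset (Col m) := Finset.univ.image (wl G m) with hS
      have hmemS : ∀ x : β, wl G m x ∈ S := by
        intro x; simp [hS]
      have hinj : ∀ c ∈ S, ∀ c' ∈ S, χ c = χ c' → c = c' := by
        intro c hc c' hc' hcc
        simp only [hS, Finset.mem_image] at hc hc'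
        obtain ⟨x, -, rfl⟩ := hc
        obtain ⟨y, -, rfl⟩ := hc'
        have h1 := hrep_spec _ ⟨x, rfl⟩
        have h2 := hrep_spec _ ⟨y, rfl⟩
        rw [← h1, ← h2]
        exact ih _ _ hcc
      -- the linear relation
      have hsum : ∀ f : RFle m, ∑ c ∈ S, ((L.count c : ℚ) - R.count c) * χ c f = 0 := by
        intro f
        have hkey : ∀ (p : β), ∑ c ∈ S,
            (((G.neighborFinset p).val.map (wl G m)).count c : ℚ) * χ c f
            = ∑ u ∈ G.neighborFinset p, (homF G f.1 u : ℚ) := by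
          intro p
          set M := (G.neighborFinset p).val.map (wl G m) with hM
          have h1 : (M.map (fun c => χ c f)).sum = ∑ c ∈ M.toFinset, (M.count c : ℚ) * χ c f := by
            rw [Finset.sum_multiset_map_count]
            simp [nsmul_eq_mul]
          have h2 : M.toFinset ⊆ S := by
            intro c hc
            simp only [hM, Multiset.mem_toFinset, Multiset.mem_map] at hc
            obtain ⟨x, -, rfl⟩ := hc
            exact hmemS x
          have h3 : ∑ c ∈ S, (M.count c : ℚ) * χ c f
              = ∑ c ∈ M.toFinset, (M.count c : ℚ) * χ c f := by
            refine (Finset.sum_subset h2 ?_).symm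
            intro c _ hc
            simp only [Multiset.mem_toFinset] at hc
            rw [Multiset.count_eq_zero_of_notMem hc]
            simp
          rw [h3, ← h1, hM, Multiset.map_map]
          have h4 : ∀ x ∈ (G.neighborFinset p).val, ((fun c => χ c f) ∘ wl G m) x
              = (homF G f.1 x : ℚ) := by
            intro x _
            simp only [Function.comp_apply]
            rw [← hχx x]
            rfl
          rw [Multiset.map_congr rfl h4]
          rw [Finset.sum_eq_multiset_sum]
        have hv := hkey v
        have hw := hkey w
        have hhom : ∑ u ∈ G.neighborFinset v, (homF G f.1 u : ℚ)
            = ∑ u ∈ G.neighborFinset w, (homF G f.1 u : ℚ) := by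
          have hf : (RF.cons f.1 .nil).depth ≤ m + 1 := by
            simp only [RF.depth]
            have hfd : (f : RF).depth ≤ m := f.2
            omega
          have := DFunLike.congr_fun h ⟨RF.cons f.1 .nil, hf⟩
          simp only [chr, MonoidHom.coe_mk, OneHom.coe_mk, homF] at this
          push_cast at this
          simpa using this
        calc ∑ c ∈ S, ((L.count c : ℚ) - R.count c) * χ c f
            = ∑ c ∈ S, ((L.count c : ℚ) * χ c f) - ∑ c ∈ S, ((R.count c : ℚ) * χ c f) := by
              rw [← Finset.sum_sub_distrib]; congr 1; ext c; ring
          _ = 0 := by rw [hL, hR, hv, hw, hhom]; ring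
      -- linear independence of characters
      have hli : LinearIndependent ℚ (fun c : {c // c ∈ S} => ⇑(χ c.1)) := by
        apply (linearIndependent_monoidHom (RFle m) ℚ).comp
        intro c c' hcc
        exact Subtype.ext (hinj c.1 c.2 c'.1 c'.2 hcc)
      have hzero : ∀ c ∈ S, ((L.count c : ℚ) - R.count c) = 0 := by
        have := Fintype.linearIndependent_iff.mp hli
          (fun c => ((L.count c.1 : ℚ) - R.count c.1))
        have hsum2 : ∑ c : {c // c ∈ S}, ((L.count c.1 : ℚ) - R.count c.1) • ⇑(χ c.1) = 0 := by
          funext f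
          have := hsum f
          simp only [Finset.sum_apply, Pi.smul_apply, smul_eq_mul, Pi.zero_apply]
          rw [← Finset.sum_attach S (fun c => ((L.count c : ℚ) - R.count c) * χ c f)] at this
          exact this
        intro c hc
        exact this hsum2 ⟨c, hc⟩
      refine Multiset.ext.mpr (fun c => ?_)
      by_cases hc : c ∈ S
      · have := hzero c hc
        have : (L.count c : ℚ) = R.count c := by linarith
        exact_mod_cast this
      · have hL0 : L.count c = 0 := by
          rw [Multiset.count_eq_zero_of_notMem]
          intro hmem
          simp only [hL, Multiset.mem_map] at hmem
          obtain ⟨x, -, rfl⟩ := hmem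
          exact hc (hmemS x)
        have hR0 : R.count c = 0 := by
          rw [Multiset.count_eq_zero_of_notMem]
          intro hmem
          simp only [hR, Multiset.mem_map] at hmem
          obtain ⟨x, -, rfl⟩ := hmem
          exact hc (hmemS x)
        rw [hL0, hR0]

end Congr

section SumGraph

variable {V W : Type*}

/-- Disjoint union of two simple graphs. -/
def sumGraph (G : SimpleGraph V) (H : SimpleGraph W) : SimpleGraph (V ⊕ W) where
  Adj x y := match x, y with
    | .inl a, .inl b => G.Adj a b
    | .inr a, .inr b => H.Adj a b
    | _, _ => False
  symm := ⟨by rintro (a|a) (b|b) h <;> first | exact G.adj_symm h | exact H.adj_symm h | exact h.elim⟩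
  loopless := ⟨by rintro (a|a) h <;> first | exact G.irrefl h | exact H.irrefl h⟩

variable (G : SimpleGraph V) (H : SimpleGraph W) [DecidableRel G.Adj] [DecidableRel H.Adj]

instance : DecidableRel (sumGraph G H).Adj := fun x y =>
  match x, y with
  | .inl a, .inl b => (inferInstance : Decidable (G.Adj a b))
  | .inl _, .inr _ => .isFalse (fun h => h)
  | .inr _, .inl _ => .isFalse (fun h => h)
  | .inr a, .inr b => (inferInstance : Decidable (H.Adj a b))

variable [Fintype V] [Fintype W] [DecidableEq V] [DecidableEq W]

lemma sumGraph_neighborFinset_inl (v : V) :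
    (sumGraph G H).neighborFinset (.inl v)
      = (G.neighborFinset v).map ⟨Sum.inl, Sum.inl_injective⟩ := by
  ext x
  cases x with
  | inl a =>
      simp only [SimpleGraph.mem_neighborFinset, Finset.mem_map, Function.Embedding.coeFn_mk]
      constructor
      · intro h; exact ⟨a, by simpa [SimpleGraph.mem_neighborFinset, sumGraph] using h, rfl⟩
      · rintro ⟨b, hb, hba⟩
        cases hba
        simpa [SimpleGraph.mem_neighborFinset, sumGraph] using hb
  | inr a =>
      simp only [SimpleGraph.mem_neighborFinset, Finset.mem_map, Function.Embedding.coeFn_mk]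
      constructor
      · intro h; exact h.elim
      · rintro ⟨b, hb, hba⟩; cases hba

lemma sumGraph_neighborFinset_inr (w : W) :
    (sumGraph G H).neighborFinset (.inr w)
      = (H.neighborFinset w).map ⟨Sum.inr, Sum.inr_injective⟩ := by
  ext x
  cases x with
  | inr a =>
      simp only [SimpleGraph.mem_neighborFinset, Finset.mem_map, Function.Embedding.coeFn_mk]
      constructor
      · intro h; exact ⟨a, by simpa [SimpleGraph.mem_neighborFinset, sumGraph] using h, rfl⟩
      · rintro ⟨b, hb, hba⟩
        cases hba
        simpa [SimpleGraph.mem_neighborFinset, sumGraph] using hb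
  | inl a =>
      simp only [SimpleGraph.mem_neighborFinset, Finset.mem_map, Function.Embedding.coeFn_mk]
      constructor
      · intro h; exact h.elim
      · rintro ⟨b, hb, hba⟩; cases hba

lemma wl_sum_inl : ∀ (k : ℕ) (v : V), wl (sumGraph G H) k (.inl v) = wl G k v := by
  intro k
  induction k with
  | zero => intro v; rfl
  | succ m ih =>
      intro v
      show (_, _) = (_, _)
      rw [sumGraph_neighborFinset_inl]
      congr 1
      · exact ih v
      · rw [Finset.map_val, Multiset.map_map]
        exact Multiset.map_congr rfl (fun x _ => ih x)

lemma wl_sum_inr : ∀ (k : ℕ) (w : W), wl (sumGraph G H) k (.inr w) = wl H k w := by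
  intro k
  induction k with
  | zero => intro v; rfl
  | succ m ih =>
      intro v
      show (_, _) = (_, _)
      rw [sumGraph_neighborFinset_inr]
      congr 1
      · exact ih v
      · rw [Finset.map_val, Multiset.map_map]
        exact Multiset.map_congr rfl (fun x _ => ih x)

lemma homF_sum_inl : ∀ (f : RF) (v : V), homF (sumGraph G H) f (.inl v) = homF G f v := by
  intro f
  induction f with
  | nil => intro v; rfl
  | cons t g iht ihg =>
      intro v
      show (∑ u ∈ (sumGraph G H).neighborFinset (.inl v), homF _ t u) * _ = _
      rw [sumGraph_neighborFinset_inl, Finset.sum_map]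
      simp only [Function.Embedding.coeFn_mk]
      rw [Finset.sum_congr rfl (fun x _ => iht x), ihg v]
      rfl

lemma homF_sum_inr : ∀ (f : RF) (w : W), homF (sumGraph G H) f (.inr w) = homF H f w := by
  intro f
  induction f with
  | nil => intro v; rfl
  | cons t g iht ihg =>
      intro v
      show (∑ u ∈ (sumGraph G H).neighborFinset (.inr v), homF _ t u) * _ = _
      rw [sumGraph_neighborFinset_inr, Finset.sum_map]
      simp only [Function.Embedding.coeFn_mk]
      rw [Finset.sum_congr rfl (fun x _ => iht x), ihg v]
      rfl

end SumGraph

section Hub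

variable {β : Type*} [Fintype β] (G : SimpleGraph β) [DecidableRel G.Adj]

/-- If two multisets of vertices have equal total rooted homomorphism counts for all
forests of depth at most `k`, then they have the same multisets of `k`-round WL colors. -/
lemma multiset_wl_map_eq (k : ℕ) (m₁ m₂ : Multiset β)
    (hyp : ∀ f : RF, f.depth ≤ k →
      (m₁.map (fun x => (homF G f x : ℚ))).sum = (m₂.map (fun x => (homF G f x : ℚ))).sum) :
    m₁.map (wl G k) = m₂.map (wl G k) := by
  classical
  by_cases hne : Nonempty β
  swap
  · have hie : IsEmpty β := not_nonempty_iff.mp hne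
    have h1 : m₁ = 0 := Multiset.eq_zero_of_forall_notMem (fun x _ => hie.false x)
    have h2 : m₂ = 0 := Multiset.eq_zero_of_forall_notMem (fun x _ => hie.false x)
    rw [h1, h2]
  set L := m₁.map (wl G k) with hL
  set R := m₂.map (wl G k) with hR
  set rep : Col k → β := fun c => if h : ∃ x, wl G k x = c then h.choose else Classical.arbitrary β
    with hrep
  have hrep_spec : ∀ c : Col k, (∃ x, wl G k x = c) → wl G k (rep c) = c := by
    intro c hc; simp only [hrep, dif_pos hc]; exact hc.choose_spec
  set χ : Col k → (RFle k →* ℚ) := fun c => chr G (rep c) k with hχ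
  have hχx : ∀ x : β, chr G x k = χ (wl G k x) := by
    intro x
    exact chr_eq_of_wl G ((hrep_spec _ ⟨x, rfl⟩).symm)
  set S : Finset (Col k) := Finset.univ.image (wl G k) with hS
  have hmemS : ∀ x : β, wl G k x ∈ S := by intro x; simp [hS]
  have hinj : ∀ c ∈ S, ∀ c' ∈ S, χ c = χ c' → c = c' := by
    intro c hc c' hc' hcc
    simp only [hS, Finset.mem_image] at hc hc'
    obtain ⟨x, -, rfl⟩ := hc
    obtain ⟨y, -, rfl⟩ := hc'
    have h1 := hrep_spec _ ⟨x, rfl⟩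
    have h2 := hrep_spec _ ⟨y, rfl⟩
    rw [← h1, ← h2]
    exact wl_eq_of_chr G k _ _ hcc
  have hsum : ∀ f : RFle k, ∑ c ∈ S, ((L.count c : ℚ) - R.count c) * χ c f = 0 := by
    intro f
    have hkey : ∀ (m : Multiset β), ∑ c ∈ S, ((m.map (wl G k)).count c : ℚ) * χ c f
        = (m.map (fun x => (homF G f.1 x : ℚ))).sum := by
      intro m
      set M := m.map (wl G k) with hM
      have h1 : (M.map (fun c => χ c f)).sum = ∑ c ∈ M.toFinset, (M.count c : ℚ) * χ c f := by
        rw [Finset.sum_multiset_map_count]; simp [nsmul_eq_mul]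
      have h2 : M.toFinset ⊆ S := by
        intro c hc
        simp only [hM, Multiset.mem_toFinset, Multiset.mem_map] at hc
        obtain ⟨x, -, rfl⟩ := hc
        exact hmemS x
      have h3 : ∑ c ∈ S, (M.count c : ℚ) * χ c f
          = ∑ c ∈ M.toFinset, (M.count c : ℚ) * χ c f := by
        refine (Finset.sum_subset h2 ?_).symm
        intro c _ hc
        simp only [Multiset.mem_toFinset] at hc
        rw [Multiset.count_eq_zero_of_notMem hc]
        simp
      rw [h3, ← h1, hM, Multiset.map_map]
      congr 1
      refine Multiset.map_congr rfl (fun x _ => ?_)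
      simp only [Function.comp_apply]
      rw [← hχx x]
      rfl
    have hv := hkey m₁
    have hw := hkey m₂
    calc ∑ c ∈ S, ((L.count c : ℚ) - R.count c) * χ c f
        = ∑ c ∈ S, ((L.count c : ℚ) * χ c f) - ∑ c ∈ S, ((R.count c : ℚ) * χ c f) := by
          rw [← Finset.sum_sub_distrib]; congr 1; ext c; ring
      _ = 0 := by rw [hL, hR, hv, hw, hyp f.1 f.2]; ring
  have hli : LinearIndependent ℚ (fun c : {c // c ∈ S} => ⇑(χ c.1)) := by
    apply (linearIndependent_monoidHom (RFle k) ℚ).comp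
    intro c c' hcc
    exact Subtype.ext (hinj c.1 c.2 c'.1 c'.2 hcc)
  have hzero : ∀ c ∈ S, ((L.count c : ℚ) - R.count c) = 0 := by
    have hli2 := Fintype.linearIndependent_iff.mp hli
      (fun c => ((L.count c.1 : ℚ) - R.count c.1))
    have hsum2 : ∑ c : {c // c ∈ S}, ((L.count c.1 : ℚ) - R.count c.1) • ⇑(χ c.1) = 0 := by
      funext f
      have := hsum f
      simp only [Finset.sum_apply, Pi.smul_apply, smul_eq_mul, Pi.zero_apply]
      rw [← Finset.sum_attach S (fun c => ((L.count c : ℚ) - R.count c) * χ c f)] at this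
      exact this
    intro c hc
    exact hli2 hsum2 ⟨c, hc⟩
  refine Multiset.ext.mpr (fun c => ?_)
  by_cases hc : c ∈ S
  · have h0 := hzero c hc
    have : (L.count c : ℚ) = R.count c := by linarith
    exact_mod_cast this
  · have hL0 : L.count c = 0 := by
      rw [Multiset.count_eq_zero_of_notMem]
      intro hmem
      simp only [hL, Multiset.mem_map] at hmem
      obtain ⟨x, -, rfl⟩ := hmem
      exact hc (hmemS x)
    have hR0 : R.count c = 0 := by
      rw [Multiset.count_eq_zero_of_notMem]
      intro hmem
      simp only [hR, Multiset.mem_map] at hmem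
      obtain ⟨x, -, rfl⟩ := hmem
      exact hc (hmemS x)
    rw [hL0, hR0]

end Hub

section Hub2

variable {V W : Type*} [Fintype V] [Fintype W] [DecidableEq V] [DecidableEq W]
variable (G : SimpleGraph V) (H : SimpleGraph W) [DecidableRel G.Adj] [DecidableRel H.Adj]

/-- The number of vertices with a given WL color. -/
def classCard (k : ℕ) (c : Col k) : ℕ := (Finset.univ.filter (fun v => wl G k v = c)).card

lemma classCard_eq_count (k : ℕ) (c : Col k) :
    classCard G k c = ((Finset.univ : Finset V).val.map (wl G k)).count c := by
  rw [Multiset.count_map]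
  rw [classCard, Finset.card_def, Finset.filter_val]
  congr 1
  exact Multiset.filter_congr (fun x _ => by constructor <;> exact Eq.symm)

lemma eqCS_of_homF_sums
    (hyp : ∀ f : RF, ∑ v, homF G f v = ∑ w, homF H f w) :
    ∀ (k : ℕ) (c : Col k), classCard G k c = classCard H k c := by
  intro k c
  have key := multiset_wl_map_eq (sumGraph G H) k
      ((Finset.univ : Finset V).val.map Sum.inl)
      ((Finset.univ : Finset W).val.map Sum.inr) ?_
  · rw [Multiset.map_map, Multiset.map_map] at key
    have h1 : ((Finset.univ : Finset V).val.map (wl (sumGraph G H) k ∘ Sum.inl))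
        = ((Finset.univ : Finset V).val.map (wl G k)) :=
      Multiset.map_congr rfl (fun x _ => wl_sum_inl G H k x)
    have h2 : ((Finset.univ : Finset W).val.map (wl (sumGraph G H) k ∘ Sum.inr))
        = ((Finset.univ : Finset W).val.map (wl H k)) :=
      Multiset.map_congr rfl (fun x _ => wl_sum_inr G H k x)
    rw [h1, h2] at key
    rw [classCard_eq_count, classCard_eq_count, key]
  · intro f _
    rw [Multiset.map_map, Multiset.map_map]
    have h1 : ((Finset.univ : Finset V).val.map ((fun x => (homF (sumGraph G H) f x : ℚ)) ∘ Sum.inl))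
        = ((Finset.univ : Finset V).val.map (fun x => (homF G f x : ℚ))) :=
      Multiset.map_congr rfl (fun x _ => by simp [homF_sum_inl G H f x])
    have h2 : ((Finset.univ : Finset W).val.map ((fun x => (homF (sumGraph G H) f x : ℚ)) ∘ Sum.inr))
        = ((Finset.univ : Finset W).val.map (fun x => (homF H f x : ℚ))) :=
      Multiset.map_congr rfl (fun x _ => by simp [homF_sum_inr G H f x])
    rw [h1, h2, ← Finset.sum_eq_multiset_sum, ← Finset.sum_eq_multiset_sum]
    exact_mod_cast hyp f

lemma homF_sums_of_eqCS
    (hyp : ∀ (k : ℕ) (c : Col k), classCard G k c = classCard H k c) :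
    ∀ f : RF, ∑ v, homF G f v = ∑ w, homF H f w := by
  intro f
  set k := f.depth with hk
  set Γ := sumGraph G H with hΓ
  have hmul : ((Finset.univ : Finset V).val.map Sum.inl).map (wl Γ k)
      = ((Finset.univ : Finset W).val.map Sum.inr).map (wl Γ k) := by
    refine Multiset.ext.mpr (fun c => ?_)
    rw [Multiset.map_map, Multiset.map_map]
    have h1 : ((Finset.univ : Finset V).val.map (wl Γ k ∘ Sum.inl))
        = ((Finset.univ : Finset V).val.map (wl G k)) :=
      Multiset.map_congr rfl (fun x _ => wl_sum_inl G H k x)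
    have h2 : ((Finset.univ : Finset W).val.map (wl Γ k ∘ Sum.inr))
        = ((Finset.univ : Finset W).val.map (wl H k)) :=
      Multiset.map_congr rfl (fun x _ => wl_sum_inr G H k x)
    rw [h1, h2, ← classCard_eq_count, ← classCard_eq_count]
    exact hyp k c
  have := map_eq_map_of_fiber hmul
    (f := fun x => homF Γ f x)
    (fun x y hxy => homF_congr Γ f k le_rfl x y hxy)
  rw [Multiset.map_map, Multiset.map_map] at this
  have h1 : ((Finset.univ : Finset V).val.map ((homF Γ f) ∘ Sum.inl))
      = ((Finset.univ : Finset V).val.map (homF G f)) :=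
    Multiset.map_congr rfl (fun x _ => homF_sum_inl G H f x)
  have h2 : ((Finset.univ : Finset W).val.map ((homF Γ f) ∘ Sum.inr))
      = ((Finset.univ : Finset W).val.map (homF H f)) :=
    Multiset.map_congr rfl (fun x _ => homF_sum_inr G H f x)
  rw [h1, h2] at this
  have hs := congrArg Multiset.sum this
  rw [Finset.sum_eq_multiset_sum, Finset.sum_eq_multiset_sum]
  exact hs
end Hub2

lemma count_map_filter {α γ : Type*} [DecidableEq γ] (s : Finset α) (f : α → γ) (c : γ)
    [DecidablePred (fun a => f a = c)] :
    ((s.val.map f).count c) = (s.filter (fun a => f a = c)).card := by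
  rw [Multiset.count_map, Finset.card_def, Finset.filter_val]
  congr 1
  exact (Multiset.filter_congr (fun x _ => by constructor <;> exact Eq.symm)).symm

section Fiso

variable {V W : Type*} [Fintype V] [Fintype W] [DecidableEq V] [DecidableEq W]

lemma dsFix {D : Matrix V V ℝ} (h0 : ∀ i j, 0 ≤ D i j)
    (hr : ∀ i, ∑ j, D i j = 1) (hc : ∀ j, ∑ i, D i j = 1)
    {x : V → ℝ} (hx : D *ᵥ x = x) :
    ∀ i j, 0 < D i j → x i = x j := by
  have hmv : ∀ i, ∑ j, D i j * x j = x i := by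
    intro i
    have := congrFun hx i
    simpa [Matrix.mulVec, dotProduct] using this
  have e1 : ∑ i, ∑ j, D i j * (x i)^2 = ∑ i, (x i)^2 := by
    refine Finset.sum_congr rfl (fun i _ => ?_)
    rw [← Finset.sum_mul, hr i, one_mul]
  have e2 : ∑ i, ∑ j, D i j * (x j)^2 = ∑ j, (x j)^2 := by
    rw [Finset.sum_comm]
    refine Finset.sum_congr rfl (fun j _ => ?_)
    rw [← Finset.sum_mul, hc j, one_mul]
  have e3 : ∑ i, ∑ j, D i j * x i * x j = ∑ i, (x i)^2 := by
    refine Finset.sum_congr rfl (fun i _ => ?_)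
    have h : ∑ j, D i j * x i * x j = x i * ∑ j, D i j * x j := by
      rw [Finset.mul_sum]
      exact Finset.sum_congr rfl (fun j _ => by ring)
    rw [h, hmv i]; ring
  have key : ∑ i, ∑ j, D i j * (x i - x j)^2 = 0 := by
    calc ∑ i, ∑ j, D i j * (x i - x j)^2
        = ∑ i, ∑ j, (D i j * (x i)^2 - 2*(D i j * x i * x j) + D i j * (x j)^2) := by
          refine Finset.sum_congr rfl fun i _ => Finset.sum_congr rfl fun j _ => by ring
      _ = ∑ i, ((∑ j, D i j * (x i)^2) - 2*(∑ j, D i j * x i * x j) + (∑ j, D i j * (x j)^2)) := by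
          refine Finset.sum_congr rfl fun i _ => ?_
          rw [Finset.sum_add_distrib, Finset.sum_sub_distrib, Finset.mul_sum]
      _ = (∑ i, ∑ j, D i j * (x i)^2) - 2*(∑ i, ∑ j, D i j * x i * x j)
            + (∑ i, ∑ j, D i j * (x j)^2) := by
          rw [Finset.sum_add_distrib, Finset.sum_sub_distrib, Finset.mul_sum]
      _ = 0 := by rw [e1, e2, e3]; ring
  have hterm : ∀ (p q : V), 0 ≤ D p q * (x p - x q)^2 :=
    fun p q => mul_nonneg (h0 _ _) (sq_nonneg _)
  intro i j hij
  have hinner : ∑ j', D i j' * (x i - x j')^2 = 0 := by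
    have := (Finset.sum_eq_zero_iff_of_nonneg
      (fun i' _ => Finset.sum_nonneg (fun j' _ => hterm i' j'))).mp key
    exact this i (Finset.mem_univ i)
  have hz : D i j * (x i - x j)^2 = 0 := by
    have := (Finset.sum_eq_zero_iff_of_nonneg (fun j' _ => hterm i j')).mp hinner
    exact this j (Finset.mem_univ j)
  have hsq : (x i - x j)^2 = 0 := by
    rcases mul_eq_zero.mp hz with h | h
    · exact absurd h (ne_of_gt hij)
    · exact h
  have h2 := pow_eq_zero_iff (n := 2) (by norm_num) |>.mp hsq
  linarith [sub_eq_zero.mp h2]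

variable (G : SimpleGraph V) (H : SimpleGraph W) [DecidableRel G.Adj] [DecidableRel H.Adj]

/-- Real indicator vector of a WL color class. -/
def wlInd {β : Type*} [Fintype β] (G : SimpleGraph β) [DecidableRel G.Adj]
    (k : ℕ) (c : Col k) : β → ℝ := fun v => if wl G k v = c then 1 else 0

lemma wlInd_nonneg {β : Type*} [Fintype β] (G : SimpleGraph β) [DecidableRel G.Adj]
    (k : ℕ) (c : Col k) (v : β) : 0 ≤ wlInd G k c v := by
  unfold wlInd; split <;> norm_num

variable {G H}

lemma fiso_step
    {X : Matrix V W ℝ} (h0 : ∀ v w, 0 ≤ X v w)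
    (hAX : G.adjMatrix ℝ * X = X * H.adjMatrix ℝ)
    (hrow : X *ᵥ (fun _ => 1) = fun _ => 1)
    (hcol : (fun _ => (1:ℝ)) ᵥ* X = fun _ => 1)
    (k : ℕ)
    (h1 : ∀ c : Col k, X *ᵥ wlInd H k c = wlInd G k c)
    (h2 : ∀ c : Col k, Xᵀ *ᵥ wlInd G k c = wlInd H k c) :
    ∀ c : Col (k+1), X *ᵥ wlInd H (k+1) c = wlInd G (k+1) c := by
  have hrow' : ∀ v, ∑ w, X v w = 1 := by
    intro v
    have := congrFun hrow v
    simpa [Matrix.mulVec, dotProduct] using this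
  have hcol' : ∀ w, ∑ v, X v w = 1 := by
    intro w
    have := congrFun hcol w
    simpa [Matrix.vecMul, dotProduct] using this
  have key1 : ∀ v w, 0 < X v w → wl G k v = wl H k w := by
    intro v w hvw
    have hh := congrFun (h1 (wl H k w)) v
    have hle : X v w ≤ (X *ᵥ wlInd H k (wl H k w)) v := by
      have hmv : (X *ᵥ wlInd H k (wl H k w)) v = ∑ w', X v w' * wlInd H k (wl H k w) w' := by
        simp [Matrix.mulVec, dotProduct]
      rw [hmv]
      have hXw : X v w * wlInd H k (wl H k w) w = X v w := by
        unfold wlInd; rw [if_pos rfl, mul_one]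
      calc X v w = X v w * wlInd H k (wl H k w) w := hXw.symm
        _ ≤ _ := Finset.single_le_sum (f := fun w' => X v w' * wlInd H k (wl H k w) w')
              (fun w' _ => mul_nonneg (h0 v w') (wlInd_nonneg H k _ w')) (Finset.mem_univ w)
    rw [hh] at hle
    by_contra hne
    have hz : wlInd G k (wl H k w) v = 0 := by unfold wlInd; rw [if_neg hne]
    rw [hz] at hle
    linarith
  set hvec : Col k → V → ℝ := fun c => G.adjMatrix ℝ *ᵥ wlInd G k c with hhvec
  set h'vec : Col k → W → ℝ := fun c => H.adjMatrix ℝ *ᵥ wlInd H k c with hh'vec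
  have e1 : ∀ c, X *ᵥ h'vec c = hvec c := by
    intro c
    rw [hh'vec, hhvec]
    show X *ᵥ (H.adjMatrix ℝ *ᵥ wlInd H k c) = _
    rw [Matrix.mulVec_mulVec, ← hAX, ← Matrix.mulVec_mulVec, h1 c]
  have hBXt : H.adjMatrix ℝ * Xᵀ = Xᵀ * G.adjMatrix ℝ := by
    have h := congrArg Matrix.transpose hAX
    rw [Matrix.transpose_mul, Matrix.transpose_mul, SimpleGraph.transpose_adjMatrix,
      SimpleGraph.transpose_adjMatrix] at h
    exact h.symm
  have e2 : ∀ c, Xᵀ *ᵥ hvec c = h'vec c := by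
    intro c
    rw [hh'vec, hhvec]
    show Xᵀ *ᵥ (G.adjMatrix ℝ *ᵥ wlInd G k c) = _
    rw [Matrix.mulVec_mulVec, ← hBXt, ← Matrix.mulVec_mulVec, h2 c]
  have hXt1 : Xᵀ *ᵥ (fun _ => (1:ℝ)) = fun _ => 1 := by
    rw [Matrix.mulVec_transpose, hcol]
  have hD0 : ∀ i j, 0 ≤ (X * Xᵀ) i j := by
    intro i j
    rw [Matrix.mul_apply]
    exact Finset.sum_nonneg (fun x _ => mul_nonneg (h0 i x) (h0 j x))
  have hD1 : (X * Xᵀ) *ᵥ (fun _ => (1:ℝ)) = fun _ => 1 := by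
    rw [← Matrix.mulVec_mulVec, hXt1, hrow]
  have hD1' : (fun _ => (1:ℝ)) ᵥ* (X * Xᵀ) = fun _ => 1 := by
    rw [← Matrix.vecMul_vecMul, hcol, Matrix.vecMul_transpose, hrow]
  have hDr : ∀ i, ∑ j, (X * Xᵀ) i j = 1 := by
    intro i
    have := congrFun hD1 i
    simpa [Matrix.mulVec, dotProduct] using this
  have hDc : ∀ j, ∑ i, (X * Xᵀ) i j = 1 := by
    intro j
    have := congrFun hD1' j
    simpa [Matrix.vecMul, dotProduct] using this
  have hDfix : ∀ c, (X * Xᵀ) *ᵥ hvec c = hvec c := by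
    intro c
    rw [← Matrix.mulVec_mulVec, e2 c, e1 c]
  have hsame : ∀ c p q, 0 < (X * Xᵀ) p q → hvec c p = hvec c q :=
    fun c => dsFix hD0 hDr hDc (hDfix c)
  have key2 : ∀ c v w, 0 < X v w → h'vec c w = hvec c v := by
    intro c v w hvw
    have he2 := congrFun (e2 c) w
    have hXt : (Xᵀ *ᵥ hvec c) w = ∑ u, X u w * hvec c u := by
      simp [Matrix.mulVec, dotProduct, Matrix.transpose_apply]
    have hterm : ∀ u, X u w * hvec c u = X u w * hvec c v := by
      intro u
      rcases eq_or_lt_of_le (h0 u w) with h | h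
      · rw [← h]; ring
      · have hD : 0 < (X * Xᵀ) v u := by
          have hle : X v w * X u w ≤ ∑ x, X v x * X u x :=
            Finset.single_le_sum (f := fun x => X v x * X u x)
              (fun x _ => mul_nonneg (h0 v x) (h0 u x)) (Finset.mem_univ w)
          have hpos : 0 < X v w * X u w := mul_pos hvw h
          have : 0 < ∑ x, X v x * X u x := lt_of_lt_of_le hpos hle
          simpa [Matrix.mul_apply, Matrix.transpose_apply] using this
        rw [hsame c v u hD]
    rw [← he2, hXt]
    calc ∑ u, X u w * hvec c u = ∑ u, X u w * hvec c v :=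
          Finset.sum_congr rfl (fun u _ => hterm u)
      _ = (∑ u, X u w) * hvec c v := by rw [Finset.sum_mul]
      _ = hvec c v := by rw [hcol' w, one_mul]
  have hcntG : ∀ (c : Col k) (v : V), hvec c v
      = (((G.neighborFinset v).val.map (wl G k)).count c : ℝ) := by
    intro c v
    show (G.adjMatrix ℝ *ᵥ wlInd G k c) v = _
    rw [SimpleGraph.adjMatrix_mulVec_apply]
    unfold wlInd
    rw [Finset.sum_boole, count_map_filter]
  have hcntH : ∀ (c : Col k) (w : W), h'vec c w
      = (((H.neighborFinset w).val.map (wl H k)).count c : ℝ) := by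
    intro c w
    show (H.adjMatrix ℝ *ᵥ wlInd H k c) w = _
    rw [SimpleGraph.adjMatrix_mulVec_apply]
    unfold wlInd
    rw [Finset.sum_boole, count_map_filter]
  have KEY : ∀ v w, 0 < X v w → wl G (k+1) v = wl H (k+1) w := by
    intro v w hvw
    have hfst := key1 v w hvw
    have hm : (G.neighborFinset v).val.map (wl G k) = (H.neighborFinset w).val.map (wl H k) := by
      refine Multiset.ext.mpr (fun c => ?_)
      have h := key2 c v w hvw
      rw [hcntG c v, hcntH c w] at h
      exact_mod_cast h.symm
    show (wl G k v, _) = (wl H k w, _)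
    rw [hfst, hm]
  intro c
  funext v
  have hmv : (X *ᵥ wlInd H (k+1) c) v = ∑ w, X v w * wlInd H (k+1) c w := by
    simp [Matrix.mulVec, dotProduct]
  rw [hmv]
  have hterm : ∀ w, X v w * wlInd H (k+1) c w = X v w * wlInd G (k+1) c v := by
    intro w
    rcases eq_or_lt_of_le (h0 v w) with h | h
    · rw [← h]; ring
    · unfold wlInd; rw [KEY v w h]
  rw [Finset.sum_congr rfl (fun w _ => hterm w), ← Finset.sum_mul, hrow' v, one_mul]

lemma fiso_ind
    {X : Matrix V W ℝ} (h0 : ∀ v w, 0 ≤ X v w)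
    (hAX : G.adjMatrix ℝ * X = X * H.adjMatrix ℝ)
    (hrow : X *ᵥ (fun _ => 1) = fun _ => 1)
    (hcol : (fun _ => (1:ℝ)) ᵥ* X = fun _ => 1) :
    ∀ (k : ℕ), (∀ c : Col k, X *ᵥ wlInd H k c = wlInd G k c)
      ∧ (∀ c : Col k, Xᵀ *ᵥ wlInd G k c = wlInd H k c) := by
  have hBXt : H.adjMatrix ℝ * Xᵀ = Xᵀ * G.adjMatrix ℝ := by
    have h := congrArg Matrix.transpose hAX
    rw [Matrix.transpose_mul, Matrix.transpose_mul, SimpleGraph.transpose_adjMatrix,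
      SimpleGraph.transpose_adjMatrix] at h
    exact h.symm
  have h0t : ∀ w v, 0 ≤ Xᵀ w v := fun w v => h0 v w
  have hrowt : Xᵀ *ᵥ (fun _ => (1:ℝ)) = fun _ => 1 := by
    rw [Matrix.mulVec_transpose, hcol]
  have hcolt : (fun _ => (1:ℝ)) ᵥ* Xᵀ = fun _ => 1 := by
    rw [Matrix.vecMul_transpose, hrow]
  intro k
  induction k with
  | zero =>
      constructor
      · intro c
        have hc : wlInd H 0 c = fun _ => 1 := by
          funext w; unfold wlInd
          rw [if_pos (Subsingleton.elim _ _)]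
        have hc' : wlInd G 0 c = fun _ => 1 := by
          funext v; unfold wlInd
          rw [if_pos (Subsingleton.elim _ _)]
        rw [hc, hc', hrow]
      · intro c
        have hc : wlInd H 0 c = fun _ => 1 := by
          funext w; unfold wlInd
          rw [if_pos (Subsingleton.elim _ _)]
        have hc' : wlInd G 0 c = fun _ => 1 := by
          funext v; unfold wlInd
          rw [if_pos (Subsingleton.elim _ _)]
        rw [hc, hc', hrowt]
  | succ m ih =>
      constructor
      · exact fiso_step h0 hAX hrow hcol m ih.1 ih.2
      · have hstep := fiso_step (G := H) (H := G) h0t hBXt hrowt hcolt m ih.2 ?_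
        · exact hstep
        · intro c
          have h := ih.1 c
          rwa [← Matrix.transpose_transpose X] at h

lemma eqCS_of_fiso
    {X : Matrix V W ℝ} (h0 : ∀ v w, 0 ≤ X v w)
    (hAX : G.adjMatrix ℝ * X = X * H.adjMatrix ℝ)
    (hrow : X *ᵥ (fun _ => 1) = fun _ => 1)
    (hcol : (fun _ => (1:ℝ)) ᵥ* X = fun _ => 1) :
    ∀ (k : ℕ) (c : Col k), classCard G k c = classCard H k c := by
  intro k c
  have h1 := (fiso_ind h0 hAX hrow hcol k).1 c
  have hcast : ((classCard G k c : ℝ)) = ((classCard H k c : ℝ)) := by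
    have hG : (classCard G k c : ℝ) = ∑ v, wlInd G k c v := by
      unfold classCard wlInd
      rw [Finset.sum_boole]
    have hH : (classCard H k c : ℝ) = ∑ w, wlInd H k c w := by
      unfold classCard wlInd
      rw [Finset.sum_boole]
    rw [hG, hH, ← h1]
    have : ∑ v, (X *ᵥ wlInd H k c) v = ∑ v, ∑ w, X v w * wlInd H k c w := by
      refine Finset.sum_congr rfl (fun v _ => ?_)
      simp [Matrix.mulVec, dotProduct]
    rw [this, Finset.sum_comm]
    refine Finset.sum_congr rfl (fun w _ => ?_)
    rw [← Finset.sum_mul]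
    have hc : ∀ w', ∑ v, X v w' = 1 := by
      intro w'
      have := congrFun hcol w'
      simpa [Matrix.vecMul, dotProduct] using this
    rw [hc w, one_mul]
  exact_mod_cast hcast

end Fiso

section Construct

variable {V W : Type*} [Fintype V] [Fintype W] [DecidableEq V] [DecidableEq W]
variable (G : SimpleGraph V) (H : SimpleGraph W) [DecidableRel G.Adj] [DecidableRel H.Adj]

lemma adj_mul_apply' (M : Matrix V W ℝ) (v : V) (w : W) :
    (G.adjMatrix ℝ * M) v w = ∑ u ∈ G.neighborFinset v, M u w := by
  simp [Matrix.mul_apply, SimpleGraph.neighborFinset_eq_filter, Finset.sum_filter]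

lemma mul_adj_apply' (M : Matrix V W ℝ) (v : V) (w : W) :
    (M * H.adjMatrix ℝ) v w = ∑ x ∈ H.neighborFinset w, M v x := by
  simp [Matrix.mul_apply, SimpleGraph.neighborFinset_eq_filter, Finset.sum_filter,
    SimpleGraph.adj_comm]

lemma exists_stable : ∃ K : ℕ, ∀ x y : V ⊕ W,
    wl (sumGraph G H) K x = wl (sumGraph G H) K y →
    wl (sumGraph G H) (K+1) x = wl (sumGraph G H) (K+1) y := by
  classical
  set Γ := sumGraph G H with hΓ
  set N : ℕ → ℕ := fun k => (Finset.univ.image (wl Γ k)).card with hN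
  have himg : ∀ k, Finset.univ.image (wl Γ k)
      = (Finset.univ.image (wl Γ (k+1))).image Prod.fst := by
    intro k
    exact (Finset.image_image (f := wl Γ (k+1)) (g := (Prod.fst : Col k × Multiset (Col k) → Col k))).symm
  have hmono : ∀ k, N k ≤ N (k+1) := by
    intro k
    rw [hN]
    simp only []
    rw [himg k]
    exact Finset.card_image_le
  have hbound : ∀ k, N k ≤ Fintype.card (V ⊕ W) := by
    intro k
    exact le_trans Finset.card_image_le (by simp)
  by_contra hcon
  push_neg at hcon
  have hstrict : ∀ k, N k < N (k+1) := by
    intro k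
    rcases hcon k with ⟨x, y, hxy, hne⟩
    rcases lt_or_eq_of_le (hmono k) with h | h
    · exact h
    · exfalso
      apply hne
      have hinj : Set.InjOn (Prod.fst : Col k × Multiset (Col k) → Col k)
          ((Finset.univ.image (wl Γ (k+1)) : Finset (Col (k+1))) : Set (Col (k+1))) := by
        apply Finset.injOn_of_card_image_eq
        rw [← himg k]
        exact h
      have h1 : wl Γ (k+1) x ∈ Finset.univ.image (wl Γ (k+1)) :=
        Finset.mem_image_of_mem _ (Finset.mem_univ x)
      have h2 : wl Γ (k+1) y ∈ Finset.univ.image (wl Γ (k+1)) :=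
        Finset.mem_image_of_mem _ (Finset.mem_univ y)
      exact hinj h1 h2 hxy
  have hSM : StrictMono N := strictMono_nat_of_lt_succ hstrict
  have h1 := hSM.le_apply (x := Fintype.card (V ⊕ W) + 1)
  have h2 := hbound (Fintype.card (V ⊕ W) + 1)
  omega

lemma fiso_of_eqCS (hyp : ∀ (k : ℕ) (c : Col k), classCard G k c = classCard H k c) :
    ∃ X : Matrix V W ℝ, (∀ v w, 0 ≤ X v w) ∧
      G.adjMatrix ℝ * X = X * H.adjMatrix ℝ ∧
      X *ᵥ (fun _ => 1) = (fun _ => 1) ∧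
      (fun _ => (1 : ℝ)) ᵥ* X = (fun _ => 1) := by
  classical
  obtain ⟨K, hst⟩ := exists_stable G H
  set dG : V → Col K → ℕ :=
    fun v d => ((G.neighborFinset v).filter (fun u => wl G K u = d)).card with hdG
  set dH : W → Col K → ℕ :=
    fun w d => ((H.neighborFinset w).filter (fun x => wl H K x = d)).card with hdH
  have hmapG : ∀ v : V, ((sumGraph G H).neighborFinset (Sum.inl v)).val.map (wl (sumGraph G H) K)
      = (G.neighborFinset v).val.map (wl G K) := by
    intro v
    rw [sumGraph_neighborFinset_inl, Finset.map_val, Multiset.map_map]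
    exact Multiset.map_congr rfl (fun x _ => wl_sum_inl G H K x)
  have hmapH : ∀ w : W, ((sumGraph G H).neighborFinset (Sum.inr w)).val.map (wl (sumGraph G H) K)
      = (H.neighborFinset w).val.map (wl H K) := by
    intro w
    rw [sumGraph_neighborFinset_inr, Finset.map_val, Multiset.map_map]
    exact Multiset.map_congr rfl (fun x _ => wl_sum_inr G H K x)
  have hsnd : ∀ x y : V ⊕ W, wl (sumGraph G H) K x = wl (sumGraph G H) K y →
      ((sumGraph G H).neighborFinset x).val.map (wl (sumGraph G H) K) = ((sumGraph G H).neighborFinset y).val.map (wl (sumGraph G H) K) :=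
    fun x y h => congrArg Prod.snd (hst x y h)
  have trGG : ∀ v v' : V, wl G K v = wl G K v' → ∀ d, dG v d = dG v' d := by
    intro v v' h d
    have h' : wl (sumGraph G H) K (.inl v) = wl (sumGraph G H) K (.inl v') := by
      rw [wl_sum_inl, wl_sum_inl, h]
    have hm := hsnd _ _ h'
    rw [hmapG v, hmapG v'] at hm
    rw [hdG]
    simp only []
    rw [← count_map_filter, ← count_map_filter, hm]
  have trGH : ∀ (v : V) (w : W), wl G K v = wl H K w → ∀ d, dG v d = dH w d := by
    intro v w h d
    have h' : wl (sumGraph G H) K (.inl v) = wl (sumGraph G H) K (.inr w) := by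
      rw [wl_sum_inl, wl_sum_inr, h]
    have hm := hsnd _ _ h'
    rw [hmapG v, hmapH w] at hm
    rw [hdG, hdH]
    simp only []
    rw [← count_map_filter, ← count_map_filter, hm]
  -- double counting within G
  have hdeg : ∀ (v : V) (d : Col K), dG v d
      = ∑ u, if (G.Adj v u ∧ wl G K u = d) then 1 else 0 := by
    intro v d
    rw [hdG]
    simp only []
    rw [Finset.card_filter, SimpleGraph.neighborFinset_eq_filter, Finset.sum_filter]
    refine Finset.sum_congr rfl (fun u _ => ?_)
    by_cases h1 : G.Adj v u
    · rw [if_pos h1]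
      by_cases h2 : wl G K u = d
      · rw [if_pos h2, if_pos ⟨h1, h2⟩]
      · rw [if_neg h2, if_neg (fun hc => h2 hc.2)]
    · rw [if_neg h1, if_neg (fun hc => h1 hc.1)]
  have hswap : ∀ c d : Col K,
      ∑ v ∈ Finset.univ.filter (fun v => wl G K v = c), dG v d
      = ∑ u ∈ Finset.univ.filter (fun u => wl G K u = d), dG u c := by
    intro c d
    have hform : ∀ c d : Col K,
        ∑ v ∈ Finset.univ.filter (fun v => wl G K v = c), dG v d
        = ∑ v, ∑ u, if (wl G K v = c ∧ G.Adj v u ∧ wl G K u = d) then 1 else 0 := by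
      intro c d
      rw [Finset.sum_filter]
      refine Finset.sum_congr rfl (fun v _ => ?_)
      by_cases h1 : wl G K v = c
      · rw [if_pos h1, hdeg v d]
        refine Finset.sum_congr rfl (fun u _ => ?_)
        by_cases h2 : G.Adj v u ∧ wl G K u = d
        · rw [if_pos h2, if_pos ⟨h1, h2⟩]
        · rw [if_neg h2, if_neg (fun hc => h2 hc.2)]
      · rw [if_neg h1]
        symm
        refine Finset.sum_eq_zero (fun u _ => ?_)
        rw [if_neg (fun hc => h1 hc.1)]
    rw [hform c d, hform d c, Finset.sum_comm]
    refine Finset.sum_congr rfl (fun u _ => Finset.sum_congr rfl (fun v _ => ?_))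
    refine if_congr ?_ rfl rfl
    constructor
    · rintro ⟨h1, h2, h3⟩; exact ⟨h3, h2.symm, h1⟩
    · rintro ⟨h1, h2, h3⟩; exact ⟨h3, h2.symm, h1⟩
  set n : Col K → ℕ := fun c => classCard G K c with hn
  have hclassG : ∀ c : Col K, (Finset.univ.filter (fun v => wl G K v = c)).card = n c := by
    intro c; rfl
  have hclassH : ∀ c : Col K, (Finset.univ.filter (fun w => wl H K w = c)).card = n c := by
    intro c
    rw [hn]
    simp only []
    rw [hyp K c]
    rfl
  have hnGpos : ∀ v : V, 0 < n (wl G K v) := by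
    intro v
    rw [← hclassG]
    exact Finset.card_pos.mpr ⟨v, Finset.mem_filter.mpr ⟨Finset.mem_univ v, rfl⟩⟩
  have hnHpos : ∀ w : W, 0 < n (wl H K w) := by
    intro w
    rw [← hclassH]
    exact Finset.card_pos.mpr ⟨w, Finset.mem_filter.mpr ⟨Finset.mem_univ w, rfl⟩⟩
  refine ⟨fun v w => if wl G K v = wl H K w then ((n (wl H K w) : ℝ))⁻¹ else 0, ?_, ?_, ?_, ?_⟩
  · intro v w
    show (0:ℝ) ≤ if wl G K v = wl H K w then ((n (wl H K w) : ℝ))⁻¹ else 0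
    by_cases h : wl G K v = wl H K w
    · rw [if_pos h]; positivity
    · rw [if_neg h]
  · ext v w
    erw [adj_mul_apply', mul_adj_apply']
    have hL : ∑ u ∈ G.neighborFinset v,
        (if wl G K u = wl H K w then ((n (wl H K w) : ℝ))⁻¹ else 0)
        = (dG v (wl H K w) : ℝ) * ((n (wl H K w) : ℝ))⁻¹ := by
      rw [hdG]
      simp only []
      rw [Finset.sum_ite, Finset.sum_const, Finset.sum_const_zero, add_zero]
      simp [nsmul_eq_mul]
    have hR : ∑ x ∈ H.neighborFinset w,
        (if wl G K v = wl H K x then ((n (wl H K x) : ℝ))⁻¹ else 0)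
        = (dH w (wl G K v) : ℝ) * ((n (wl G K v) : ℝ))⁻¹ := by
      have hterm : ∀ x ∈ H.neighborFinset w,
          (if wl G K v = wl H K x then ((n (wl H K x) : ℝ))⁻¹ else 0)
          = (if wl H K x = wl G K v then ((n (wl G K v) : ℝ))⁻¹ else 0) := by
        intro x _
        by_cases h : wl G K v = wl H K x
        · rw [if_pos h, if_pos h.symm, h]
        · rw [if_neg h, if_neg (fun hc => h hc.symm)]
      rw [Finset.sum_congr rfl hterm]
      rw [hdH]
      simp only []
      rw [Finset.sum_ite, Finset.sum_const, Finset.sum_const_zero, add_zero]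
      simp [nsmul_eq_mul]
    rw [hL, hR]
    -- main combinatorial identity
    set c' := wl G K v with hc'
    set d := wl H K w with hd
    obtain ⟨u₀, hu₀⟩ : ∃ u₀ : V, wl G K u₀ = d := by
      have hpos : 0 < (Finset.univ.filter (fun u : V => wl G K u = d)).card := by
        rw [hclassG]
        exact hnHpos w
      obtain ⟨u₀, hu₀⟩ := Finset.card_pos.mp hpos
      exact ⟨u₀, (Finset.mem_filter.mp hu₀).2⟩
    have hdHG : dH w c' = dG u₀ c' := (trGH u₀ w (by rw [hu₀]) c').symm
    have hkey : n c' * dG v d = n d * dG u₀ c' := by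
      have hL2 : ∑ v' ∈ Finset.univ.filter (fun v' => wl G K v' = c'), dG v' d
          = n c' * dG v d := by
        rw [Finset.sum_congr rfl (fun v' hv' => trGG v' v
          (by rw [(Finset.mem_filter.mp hv').2]) d)]
        rw [Finset.sum_const, hclassG, smul_eq_mul]
      have hR2 : ∑ u ∈ Finset.univ.filter (fun u => wl G K u = d), dG u c'
          = n d * dG u₀ c' := by
        rw [Finset.sum_congr rfl (fun u hu => trGG u u₀
          (by rw [(Finset.mem_filter.mp hu).2, hu₀]) c')]
        rw [Finset.sum_const, hclassG, smul_eq_mul]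
      rw [← hL2, ← hR2]
      exact hswap c' d
    have hnc : ((n c' : ℝ)) ≠ 0 := by
      have := hnGpos v
      rw [← hc'] at this
      positivity
    have hnd : ((n d : ℝ)) ≠ 0 := by
      have := hnHpos w
      rw [← hd] at this
      positivity
    rw [hdHG]
    have hkeyR : ((n c' : ℝ)) * dG v d = ((n d : ℝ)) * dG u₀ c' := by
      exact_mod_cast hkey
    field_simp
    nlinarith [hkeyR]
  · funext v
    have hmv : ((fun v w => if wl G K v = wl H K w then ((n (wl H K w) : ℝ))⁻¹ else 0 :
        Matrix V W ℝ) *ᵥ (fun _ => (1:ℝ))) v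
        = ∑ w, (if wl G K v = wl H K w then ((n (wl H K w) : ℝ))⁻¹ else 0) := by
      simp [Matrix.mulVec, dotProduct]
    rw [hmv]
    have hterm : ∀ w : W,
        (if wl G K v = wl H K w then ((n (wl H K w) : ℝ))⁻¹ else 0)
        = (if wl H K w = wl G K v then ((n (wl G K v) : ℝ))⁻¹ else 0) := by
      intro w
      by_cases h : wl G K v = wl H K w
      · rw [if_pos h, if_pos h.symm, h]
      · rw [if_neg h, if_neg (fun hc => h hc.symm)]
    rw [Finset.sum_congr rfl (fun w _ => hterm w)]
    rw [Finset.sum_ite, Finset.sum_const, Finset.sum_const_zero, add_zero, hclassH]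
    have hne : ((n (wl G K v) : ℝ)) ≠ 0 := by
      have := hnGpos v
      positivity
    rw [nsmul_eq_mul]
    exact mul_inv_cancel₀ hne
  · funext w
    have hmv : ((fun _ => (1:ℝ)) ᵥ* (fun v w => if wl G K v = wl H K w then
        ((n (wl H K w) : ℝ))⁻¹ else 0 : Matrix V W ℝ)) w
        = ∑ v, (if wl G K v = wl H K w then ((n (wl H K w) : ℝ))⁻¹ else 0) := by
      simp [Matrix.vecMul, dotProduct]
    rw [hmv]
    rw [Finset.sum_ite, Finset.sum_const, Finset.sum_const_zero, add_zero, hclassG]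
    have hne : ((n (wl H K w) : ℝ)) ≠ 0 := by
      have := hnHpos w
      positivity
    rw [nsmul_eq_mul]
    exact mul_inv_cancel₀ hne

end Construct

section Acyclic

open SimpleGraph Walk

lemma no_circuit_at_max {α : Type*} (G : SimpleGraph α) (rk : α → ℕ)
    (hadj : ∀ a b, G.Adj a b → rk a = rk b + 1 ∨ rk b = rk a + 1)
    (huniq : ∀ a b c, G.Adj a b → G.Adj a c → rk b + 1 = rk a → rk c + 1 = rk a → b = c) :
    ∀ (m : α) (q : G.Walk m m), q.IsCircuit → (∀ y ∈ q.support, rk y ≤ rk m) → False := by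
  intro m q hq hmax
  cases q with
  | nil => exact hq.ne_nil rfl
  | @cons _ a _ h1 q' =>
      have hND : (Walk.cons h1 q').edges.Nodup := hq.isTrail.edges_nodup
      have hamem : a ∈ (Walk.cons h1 q').support := by
        rw [Walk.support_cons]
        exact List.mem_cons_of_mem _ q'.start_mem_support
      have hrka : rk a + 1 = rk m := by
        rcases hadj m a h1 with h | h
        · omega
        · have := hmax a hamem; omega
      cases hrev : q'.reverse with
      | nil =>
          have : q' = Walk.nil.reverse := by rw [← hrev, Walk.reverse_reverse]
          rw [Walk.reverse_nil] at this
          subst this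
          exact G.loopless.irrefl m h1
      | @cons _ b _ h2 r =>
          have hbmem : b ∈ (Walk.cons h1 q').support := by
            rw [Walk.support_cons]
            apply List.mem_cons_of_mem
            have : b ∈ q'.reverse.support := by
              rw [hrev, Walk.support_cons]
              exact List.mem_cons_of_mem _ r.start_mem_support
            rwa [Walk.support_reverse, List.mem_reverse] at this
          have hrkb : rk b + 1 = rk m := by
            rcases hadj m b h2 with h | h
            · omega
            · have := hmax b hbmem; omega
          have hab : a = b := huniq m a b h1 h2 hrka hrkb
          -- edge multiplicity contradiction
          have hmem_edge : s(m, a) ∈ q'.edges := by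
            have : s(m, b) ∈ q'.reverse.edges := by
              rw [hrev, Walk.edges_cons]
              exact List.mem_cons_self
            rw [Walk.edges_reverse, List.mem_reverse] at this
            rwa [← hab] at this
          rw [Walk.edges_cons, List.nodup_cons] at hND
          exact hND.1 hmem_edge

lemma acyclic_of_rank {α : Type*} (G : SimpleGraph α) (rk : α → ℕ)
    (hadj : ∀ a b, G.Adj a b → rk a = rk b + 1 ∨ rk b = rk a + 1)
    (huniq : ∀ a b c, G.Adj a b → G.Adj a c → rk b + 1 = rk a → rk c + 1 = rk a → b = c) :
    G.IsAcyclic := by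
  classical
  intro v p hp
  obtain ⟨m, hm_mem, hm_max⟩ : ∃ m ∈ p.support, ∀ y ∈ p.support, rk y ≤ rk m := by
    obtain ⟨m, hm, hmax⟩ := p.support.toFinset.exists_max_image rk
      ⟨v, List.mem_toFinset.mpr p.start_mem_support⟩
    exact ⟨m, List.mem_toFinset.mp hm, fun y hy => hmax y (List.mem_toFinset.mpr hy)⟩
  have hqc : (p.rotate m hm_mem).IsCycle := hp.rotate hm_mem
  have hqsupp : ∀ y ∈ (p.rotate m hm_mem).support, rk y ≤ rk m := by
    intro y hy
    rw [Walk.support_eq_cons] at hy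
    rcases List.mem_cons.mp hy with rfl | hy'
    · exact le_refl _
    · have hrot := Walk.support_rotate p m hm_mem
      have hmem : y ∈ p.support.tail := hrot.mem_iff.mp hy'
      apply hm_max
      rw [Walk.support_eq_cons p]
      exact List.mem_cons_of_mem _ hmem
  exact no_circuit_at_max G rk hadj huniq m (p.rotate m hm_mem) hqc.isCircuit hqsupp

end Acyclic

section Encode

/-- Vertices of the forest `f` (excluding the external root). -/
def VF : RF → Type
  | .nil => Empty
  | .cons t f => (Unit ⊕ VF t) ⊕ VF f

def fintypeVF : ∀ f : RF, Fintype (VF f)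
  | .nil => inferInstanceAs (Fintype Empty)
  | .cons t f =>
      letI := fintypeVF t
      letI := fintypeVF f
      inferInstanceAs (Fintype ((Unit ⊕ VF t) ⊕ VF f))

instance {f : RF} : Fintype (VF f) := fintypeVF f

def decEqVF : ∀ f : RF, DecidableEq (VF f)
  | .nil => inferInstanceAs (DecidableEq Empty)
  | .cons t f =>
      letI := decEqVF t
      letI := decEqVF f
      inferInstanceAs (DecidableEq ((Unit ⊕ VF t) ⊕ VF f))

instance {f : RF} : DecidableEq (VF f) := decEqVF f

/-- The parent of a vertex in the rooted forest (`.inl ()` is the external root). -/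
def paV : (f : RF) → VF f → Unit ⊕ VF f
  | .cons t _, .inl (.inl ()) => .inl ()
  | .cons t f, .inl (.inr y) => .inr (.inl (paV t y))
  | .cons t f, .inr z => Sum.map id Sum.inr (paV f z)

/-- Rank (depth) of a vertex in the forest. -/
def rkV : (f : RF) → VF f → ℕ
  | .cons _ _, .inl (.inl ()) => 0
  | .cons t _, .inl (.inr y) => rkV t y + 1
  | .cons _ f, .inr z => rkV f z

/-- Rank on the full vertex set including the root. -/
def Rk (f : RF) : Unit ⊕ VF f → ℕ := Sum.elim (fun _ => 0) (fun x => rkV f x + 1)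

lemma Rk_paV : ∀ (f : RF) (x : VF f), Rk f (paV f x) = rkV f x := by
  intro f
  induction f with
  | nil => intro x; cases x
  | cons t f iht ihf =>
      intro x
      rcases x with (u | y) | z
      · cases u
        simp [paV, rkV, Rk]
      · have := iht y
        rcases hy : paV t y with u | y'
        · rw [hy] at this
          simp only [Rk, Sum.elim_inl] at this
          simp [paV, rkV, Rk, hy, ← this]
          rfl
        · rw [hy] at this
          simp only [Rk, Sum.elim_inr] at this
          simp [paV, rkV, Rk, hy, ← this]
          rfl
      · have := ihf z
        rcases hz : paV f z with u | z'
        · rw [hz] at this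
          simp only [Rk, Sum.elim_inl] at this
          simp [paV, rkV, Rk, hz, Sum.map, ← this]
        · rw [hz] at this
          simp only [Rk, Sum.elim_inr] at this
          simp [paV, rkV, Rk, hz, Sum.map, ← this]
          rfl

/-- The tree graph associated to a rooted forest: external root plus forest, with
parent-child edges. -/
def TG (f : RF) : SimpleGraph (Unit ⊕ VF f) :=
  SimpleGraph.fromRel (fun a b => ∃ x : VF f, a = paV f x ∧ b = Sum.inr x)

lemma TG_adj (f : RF) (a b : Unit ⊕ VF f) :
    (TG f).Adj a b ↔ a ≠ b ∧
      ((∃ x, a = paV f x ∧ b = Sum.inr x) ∨ (∃ x, b = paV f x ∧ a = Sum.inr x)) := by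
  simp [TG, SimpleGraph.fromRel_adj]

lemma paV_ne_self (f : RF) (x : VF f) : paV f x ≠ Sum.inr x := by
  intro h
  have := congrArg (Rk f) h
  rw [Rk_paV] at this
  simp only [Rk, Sum.elim_inr] at this
  omega

lemma adj_paV (f : RF) (x : VF f) : (TG f).Adj (paV f x) (Sum.inr x) := by
  rw [TG_adj]
  exact ⟨paV_ne_self f x, Or.inl ⟨x, rfl, rfl⟩⟩

lemma TG_adj_rank (f : RF) (a b : Unit ⊕ VF f) (h : (TG f).Adj a b) :
    Rk f a = Rk f b + 1 ∨ Rk f b = Rk f a + 1 := by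
  rw [TG_adj] at h
  rcases h.2 with ⟨x, rfl, rfl⟩ | ⟨x, rfl, rfl⟩
  · right; rw [Rk_paV]; simp [Rk]
  · left; rw [Rk_paV]; simp [Rk]

lemma TG_parent_unique (f : RF) (a b c : Unit ⊕ VF f)
    (hab : (TG f).Adj a b) (hac : (TG f).Adj a c)
    (hb : Rk f b + 1 = Rk f a) (hc : Rk f c + 1 = Rk f a) : b = c := by
  rw [TG_adj] at hab hac
  rcases hab.2 with ⟨x, ha, hbx⟩ | ⟨x, hbx, hax⟩
  · exfalso
    rw [ha, hbx, Rk_paV] at hb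
    simp only [Rk, Sum.elim_inr] at hb
    omega
  · rcases hac.2 with ⟨x', ha', hcx⟩ | ⟨x', hcx, hax'⟩
    · exfalso
      rw [ha', hcx, Rk_paV] at hc
      simp only [Rk, Sum.elim_inr] at hc
      omega
    · have hxx : (Sum.inr x : Unit ⊕ VF f) = Sum.inr x' := by rw [← hax, hax']
      cases Sum.inr_injective hxx
      rw [hbx, hcx]

lemma TG_acyclic (f : RF) : (TG f).IsAcyclic :=
  acyclic_of_rank (TG f) (Rk f) (TG_adj_rank f) (TG_parent_unique f)

lemma TG_reach (f : RF) : ∀ (n : ℕ) (a : Unit ⊕ VF f), Rk f a ≤ n →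
    (TG f).Reachable a (Sum.inl ()) := by
  intro n
  induction n with
  | zero =>
      intro a ha
      rcases a with u | x
      · cases u; rfl
      · simp [Rk] at ha
  | succ m ih =>
      intro a ha
      rcases a with u | x
      · cases u; rfl
      · have hadj := adj_paV f x
        have h1 : (TG f).Reachable (Sum.inr x) (paV f x) := (SimpleGraph.Adj.reachable hadj).symm
        have h2 : (TG f).Reachable (paV f x) (Sum.inl ()) := by
          apply ih
          rw [Rk_paV]
          simp only [Rk, Sum.elim_inr] at ha
          omega
        exact h1.trans h2

lemma TG_connected (f : RF) : (TG f).Connected := by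
  rw [SimpleGraph.connected_iff]
  refine ⟨fun a b => ?_, ⟨Sum.inl ()⟩⟩
  exact (TG_reach f (Rk f a) a le_rfl).trans (TG_reach f (Rk f b) b le_rfl).symm

lemma TG_isTree (f : RF) : (TG f).IsTree := ⟨TG_connected f, TG_acyclic f⟩

end Encode

section Count

lemma Nat.card_sigma' {ι : Type*} [Fintype ι] (A : ι → Type*) [∀ i, Finite (A i)] :
    Nat.card (Σ i, A i) = ∑ i, Nat.card (A i) := by
  letI : ∀ i, Fintype (A i) := fun i => Fintype.ofFinite _
  rw [Nat.card_eq_fintype_card, Fintype.card_sigma]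
  exact Finset.sum_congr rfl (fun i _ => (Nat.card_eq_fintype_card).symm)

variable {β : Type*} [Fintype β] [DecidableEq β] (G : SimpleGraph β) [DecidableRel G.Adj]

/-- Maps from the forest into `G` respecting parent adjacency, root going to `v`. -/
def cntT (f : RF) (v : β) : Type _ :=
  {g : VF f → β // ∀ x : VF f, G.Adj (Sum.elim (fun _ => v) g (paV f x)) (g x)}

instance (f : RF) (v : β) : Finite (cntT G f v) := by
  unfold cntT; infer_instance

lemma card_cntT_nil (v : β) : Nat.card (cntT G .nil v) = 1 := by
  rw [Nat.card_eq_one_iff_unique]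
  constructor
  · constructor
    intro a b
    apply Subtype.ext
    funext x
    exact Empty.elim x
  · exact ⟨⟨fun x => Empty.elim x, fun x => Empty.elim x⟩⟩

lemma elim_comp_left {t f : RF} (g : VF (.cons t f) → β) (p : Unit ⊕ VF t) :
    g (.inl p) = Sum.elim (fun _ => g (.inl (.inl ()))) (fun y => g (.inl (.inr y))) p := by
  rcases p with u | y
  · cases u; rfl
  · rfl

lemma elim_comp_right {t f : RF} (v : β) (g : VF (.cons t f) → β) (p : Unit ⊕ VF f) :
    Sum.elim (fun _ => v) g (Sum.map id Sum.inr p)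
      = Sum.elim (fun _ => v) (fun z => g (.inr z)) p := by
  rcases p with u | z
  · rfl
  · rfl

lemma cond_cons_iff (t f : RF) (v : β) (g : VF (.cons t f) → β) :
    (∀ x : VF (.cons t f), G.Adj (Sum.elim (fun _ => v) g (paV (.cons t f) x)) (g x))
    ↔ (G.Adj v (g (.inl (.inl ())))
       ∧ (∀ y : VF t, G.Adj (Sum.elim (fun _ => g (.inl (.inl ())))
            (fun y' => g (.inl (.inr y'))) (paV t y)) (g (.inl (.inr y))))
       ∧ (∀ z : VF f, G.Adj (Sum.elim (fun _ => v) (fun z' => g (.inr z')) (paV f z))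
            (g (.inr z)))) := by
  constructor
  · intro h
    refine ⟨h (.inl (.inl ())), fun y => ?_, fun z => ?_⟩
    · have hh := h (.inl (.inr y))
      rw [show paV (.cons t f) (.inl (.inr y)) = .inr (.inl (paV t y)) from rfl] at hh
      rw [show Sum.elim (fun _ => v) g (.inr (.inl (paV t y))) = g (.inl (paV t y)) from rfl] at hh
      rwa [elim_comp_left g (paV t y)] at hh
    · have hh := h (.inr z)
      rw [show paV (.cons t f) (.inr z) = Sum.map id Sum.inr (paV f z) from rfl] at hh
      rwa [← elim_comp_right v g (paV f z)]
  · rintro ⟨h0, h1, h2⟩ x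
    rcases x with (u | y) | z
    · cases u; exact h0
    · have hh := h1 y
      rw [← elim_comp_left g (paV t y)] at hh
      exact hh
    · have hh := h2 z
      rw [← elim_comp_right v g (paV f z)] at hh
      exact hh

/-- Glue maps on the pieces of a cons-forest. -/
def glue {t f : RF} (u : β) (g₁ : VF t → β) (g₂ : VF f → β) : VF (.cons t f) → β :=
  fun x => match x with
  | .inl (.inl _) => u
  | .inl (.inr y) => g₁ y
  | .inr z => g₂ z

def cntEquiv (t f : RF) (v : β) :
    cntT G (.cons t f) v ≃ Σ u : {u : β // G.Adj v u}, (cntT G t u.1 × cntT G f v) where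
  toFun g :=
    ⟨⟨g.1 (.inl (.inl ())), ((cond_cons_iff G t f v g.1).mp g.2).1⟩,
      ⟨fun y => g.1 (.inl (.inr y)), ((cond_cons_iff G t f v g.1).mp g.2).2.1⟩,
      ⟨fun z => g.1 (.inr z), ((cond_cons_iff G t f v g.1).mp g.2).2.2⟩⟩
  invFun s :=
    ⟨glue s.1.1 s.2.1.1 s.2.2.1,
      (cond_cons_iff G t f v _).mpr ⟨s.1.2, fun y => s.2.1.2 y, fun z => s.2.2.2 z⟩⟩
  left_inv g := by
    apply Subtype.ext
    funext x
    rcases x with (u | y) | z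
    · cases u; rfl
    · rfl
    · rfl
  right_inv s := rfl

lemma card_cntT_cons (t f : RF) (v : β) :
    Nat.card (cntT G (.cons t f) v)
      = (∑ u ∈ G.neighborFinset v, Nat.card (cntT G t u)) * Nat.card (cntT G f v) := by
  rw [Nat.card_congr (cntEquiv G t f v), Nat.card_sigma']
  have h1 : ∀ u : {u // G.Adj v u}, Nat.card (cntT G t u.1 × cntT G f v)
      = Nat.card (cntT G t u.1) * Nat.card (cntT G f v) := fun u => Nat.card_prod _ _
  rw [Finset.sum_congr rfl (fun u _ => h1 u), ← Finset.sum_mul]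
  congr 1
  rw [Finset.sum_subtype (G.neighborFinset v)
    (fun u => G.mem_neighborFinset v u) (fun u => Nat.card (cntT G t u))]

lemma card_cntT_eq_homF : ∀ (f : RF) (v : β), Nat.card (cntT G f v) = homF G f v := by
  intro f
  induction f with
  | nil => intro v; rw [card_cntT_nil]; rfl
  | cons t g iht ihg =>
      intro v
      rw [card_cntT_cons]
      show _ = (∑ u ∈ G.neighborFinset v, homF G t u) * homF G g v
      rw [Finset.sum_congr rfl (fun u _ => iht u), ihg v]

lemma elim_comp_all {f : RF} (h : Unit ⊕ VF f → β) (p : Unit ⊕ VF f) :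
    Sum.elim (fun _ => h (.inl ())) (fun x => h (.inr x)) p = h p := by
  rcases p with u | x
  · cases u; rfl
  · rfl

def homEquiv (f : RF) : ((TG f) →g G) ≃ Σ v : β, cntT G f v where
  toFun h :=
    ⟨h (.inl ()), ⟨fun x => h (.inr x), by
      intro x
      have hadj := h.map_adj (adj_paV f x)
      rwa [← elim_comp_all (fun p => h p) (paV f x)] at hadj⟩⟩
  invFun s :=
    { toFun := Sum.elim (fun _ => s.1) s.2.1
      map_rel' := by
        intro a b hab
        rw [TG_adj] at hab
        rcases hab.2 with ⟨x, rfl, rfl⟩ | ⟨x, rfl, rfl⟩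
        · exact s.2.2 x
        · exact (s.2.2 x).symm }
  left_inv h := by
    apply DFunLike.ext
    intro a
    rcases a with u | x
    · cases u; rfl
    · rfl
  right_inv s := rfl

lemma card_hom_TG (f : RF) : Nat.card ((TG f) →g G) = ∑ v, homF G f v := by
  rw [Nat.card_congr (homEquiv G f), Nat.card_sigma']
  exact Finset.sum_congr rfl (fun v _ => card_cntT_eq_homF G f v)

end Count

section Transport

variable {α α' γ : Type*}

lemma natcard_hom_iso {T : SimpleGraph α} {T' : SimpleGraph α'} {G : SimpleGraph γ}
    (φ : T ≃g T') : Nat.card (T →g G) = Nat.card (T' →g G) := by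
  apply Nat.card_congr
  refine ⟨fun h => h.comp φ.symm.toHom, fun h => h.comp φ.toHom, ?_, ?_⟩
  · intro h
    apply DFunLike.ext
    intro a
    show h (φ.symm (φ a)) = h a
    rw [RelIso.symm_apply_apply]
  · intro h
    apply DFunLike.ext
    intro a
    show h (φ (φ.symm a)) = h a
    rw [RelIso.apply_symm_apply]

lemma isAcyclic_iso {T : SimpleGraph α} {T' : SimpleGraph α'} (φ : T ≃g T')
    (h : T.IsAcyclic) : T'.IsAcyclic := by
  intro v p hp
  have hinj : Function.Injective φ.symm.toHom := φ.symm.injective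
  exact h (p.map φ.symm.toHom) (hp.map hinj)

lemma isTree_iso {T : SimpleGraph α} {T' : SimpleGraph α'} (φ : T ≃g T')
    (h : T.IsTree) : T'.IsTree := by
  constructor
  · exact (SimpleGraph.Iso.connected_iff φ).mp h.1
  · exact isAcyclic_iso φ h.2

end Transport

section Forward

variable {V W : Type*} [Fintype V] [Fintype W] [DecidableEq V] [DecidableEq W]
variable (G : SimpleGraph V) (H : SimpleGraph W) [DecidableRel G.Adj] [DecidableRel H.Adj]

lemma sums_from_trees
    (hyp : ∀ (n : ℕ) (T : SimpleGraph (Fin n)), T.IsTree →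
      Nat.card (T →g G) = Nat.card (T →g H)) :
    ∀ f : RF, ∑ v, homF G f v = ∑ w, homF H f w := by
  intro f
  set n := Fintype.card (Unit ⊕ VF f) with hn
  set e : (Unit ⊕ VF f) ≃ Fin n := Fintype.equivFin (Unit ⊕ VF f) with he
  set T' : SimpleGraph (Fin n) := SimpleGraph.comap e.symm (TG f) with hT'
  have φ : (TG f) ≃g T' :=
    { toEquiv := e
      map_rel_iff' := by
        intro a b
        show (TG f).Adj (e.symm (e a)) (e.symm (e b)) ↔ (TG f).Adj a b
        rw [Equiv.symm_apply_apply, Equiv.symm_apply_apply] }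
  have hTree : T'.IsTree := isTree_iso φ (TG_isTree f)
  have hcard := hyp n T' hTree
  rw [← natcard_hom_iso (G := G) φ, ← natcard_hom_iso (G := H) φ] at hcard
  rw [card_hom_TG, card_hom_TG] at hcard
  exact hcard

end Forward

section DecodeHelpers

open SimpleGraph

lemma comp_const_on_walk {δ : Type*} (Γ : SimpleGraph δ) :
    ∀ {a b : δ} (w : Γ.Walk a b) (x : δ), x ∈ w.support →
      Γ.connectedComponentMk x = Γ.connectedComponentMk a := by
  intro a b w
  induction w with
  | nil =>
      intro x hx
      rw [Walk.support_nil, List.mem_singleton] at hx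
      rw [hx]
  | @cons a' b' c' h q ih =>
      intro x hx
      rw [Walk.support_cons] at hx
      rcases List.mem_cons.mp hx with rfl | hx'
      · rfl
      · rw [ih x hx']
        exact (SimpleGraph.ConnectedComponent.sound h.reachable).symm

lemma reachable_induce_of_walk {δ : Type*} (Γ : SimpleGraph δ) (s : Set δ) :
    ∀ {a b : δ} (w : Γ.Walk a b), (∀ x ∈ w.support, x ∈ s) → ∀ (ha : a ∈ s) (hb : b ∈ s),
      (Γ.induce s).Reachable ⟨a, ha⟩ ⟨b, hb⟩ := by
  intro a b w
  induction w with
  | nil =>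
      intro _ ha hb
      exact SimpleGraph.Reachable.refl _
  | @cons a' b' c' h q ih =>
      intro hw ha hb
      have hbmem : b' ∈ s := by
        apply hw
        rw [Walk.support_cons]
        exact List.mem_cons_of_mem _ q.start_mem_support
      have hstep : (Γ.induce s).Adj ⟨a', ha⟩ ⟨b', hbmem⟩ := h
      refine (SimpleGraph.Adj.reachable hstep).trans
        (ih (fun x hx => hw x ?_) hbmem hb)
      rw [Walk.support_cons]
      exact List.mem_cons_of_mem _ hx

lemma isAcyclic_of_injective_hom {δ ε : Type*} {A : SimpleGraph δ} {B : SimpleGraph ε}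
    (φ : A →g B) (hinj : Function.Injective φ) (hB : B.IsAcyclic) : A.IsAcyclic := by
  intro v p hp
  exact hB (p.map φ) (hp.map hinj)

/-- Inclusion homomorphism from an induced subgraph. -/
def inclHom {δ : Type*} (Γ : SimpleGraph δ) (s : Set δ) : Γ.induce s →g Γ where
  toFun := Subtype.val
  map_rel' := fun h => h

lemma inclHom_injective {δ : Type*} (Γ : SimpleGraph δ) (s : Set δ) :
    Function.Injective (inclHom Γ s) := Subtype.val_injective

instance finiteHom {δ ε : Type*} [Finite δ] [Finite ε]
    (A : SimpleGraph δ) (B : SimpleGraph ε) : Finite (A →g B) :=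
  Finite.of_injective (fun h => (h : δ → ε)) DFunLike.coe_injective

end DecodeHelpers

section Decode

open SimpleGraph

lemma walk_comp_support {α : Type*} (T : SimpleGraph α) (r : α) :
    ∀ {y : α} (p : T.Walk y r), p.IsPath → ∀ x ∈ p.support,
      x = r ∨ ∃ (hx : x ≠ r) (hy : y ≠ r),
        (T.induce {z | z ≠ r}).Reachable ⟨x, hx⟩ ⟨y, hy⟩ := by
  intro y p
  induction p with
  | nil =>
      intro _ x hx
      rw [Walk.support_nil, List.mem_singleton] at hx
      exact Or.inl hx
  | @cons y' b' r' h q ih =>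
      intro hp x hx
      have hq : q.IsPath := hp.of_cons
      have hynotin : y' ∉ q.support := by
        have := hp.support_nodup
        rw [Walk.support_cons, List.nodup_cons] at this
        exact this.1
      have hyr : y' ≠ r' := fun hyr => hynotin (hyr ▸ q.end_mem_support)
      rw [Walk.support_cons] at hx
      rcases List.mem_cons.mp hx with rfl | hx'
      · exact Or.inr ⟨hyr, hyr, SimpleGraph.Reachable.refl _⟩
      · rcases ih hq x hx' with hl | ⟨hxne, hbne, hre⟩
        · exact Or.inl hl
        · refine Or.inr ⟨hxne, hyr, hre.trans ?_⟩
          have hstep : (T.induce {z | z ≠ r'}).Adj ⟨b', hbne⟩ ⟨y', hyr⟩ := h.symm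
          exact hstep.reachable

end Decode

section Split

open SimpleGraph

variable {α : Type} (T : SimpleGraph α) (r u : α)

/-- The vertices of the subtree hanging off the neighbor `u` of `r`. -/
def S1 (hu : T.Adj r u) : Set α :=
  {x | ∃ hx : x ≠ r, (T.induce {z | z ≠ r}).connectedComponentMk ⟨x, hx⟩
    = (T.induce {z | z ≠ r}).connectedComponentMk ⟨u, hu.ne'⟩}

variable (hu : T.Adj r u)

lemma u_mem_S1 : u ∈ S1 T r u hu := ⟨hu.ne', rfl⟩

lemma r_not_mem_S1 : r ∉ S1 T r u hu := fun ⟨hx, _⟩ => hx rfl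

lemma neighbor_unique [DecidableEq α] (hacyc : T.IsAcyclic) (u₁ u₂ : α)
    (h1 : T.Adj r u₁) (h2 : T.Adj r u₂) (hx1 : u₁ ≠ r) (hx2 : u₂ ≠ r)
    (hcc : (T.induce {z | z ≠ r}).connectedComponentMk ⟨u₁, hx1⟩
      = (T.induce {z | z ≠ r}).connectedComponentMk ⟨u₂, hx2⟩) : u₁ = u₂ := by
  by_contra hne
  have hre := SimpleGraph.ConnectedComponent.exact hcc
  have w := hre.some
  set wT : T.Walk u₁ u₂ := w.map (inclHom T {z | z ≠ r}) with hwT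
  have hrsupp : r ∉ wT.support := by
    rw [hwT]
    intro hmem
    have hmem' : r ∈ (w.map (inclHom T {z | z ≠ r})).support := hmem
    rw [Walk.support_map] at hmem'
    obtain ⟨x', _, hx'⟩ := List.mem_map.mp hmem'
    exact x'.2 hx'
  set P1 := wT.toPath with hP1
  have hrP1 : r ∉ (P1 : T.Walk u₁ u₂).support := by
    intro hmem
    exact hrsupp (Walk.support_toPath_subset wT hmem)
  have hq2 : (Walk.cons h1.symm (Walk.cons h2 Walk.nil) : T.Walk u₁ u₂).IsPath := by
    rw [Walk.isPath_def]
    simp only [Walk.support_cons, Walk.support_nil]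
    refine List.nodup_cons.mpr ⟨?_, List.nodup_cons.mpr ⟨?_, List.nodup_singleton _⟩⟩
    · intro hmem
      rcases List.mem_cons.mp hmem with h | h
      · exact hx1 h
      · rw [List.mem_singleton] at h
        exact hne h
    · intro hmem
      rw [List.mem_singleton] at hmem
      exact hx2 hmem.symm
  have hPeq := SimpleGraph.isAcyclic_iff_path_unique.mp hacyc P1 ⟨_, hq2⟩
  apply hrP1
  rw [hPeq]
  show r ∈ (Walk.cons h1.symm (Walk.cons h2 Walk.nil) : T.Walk u₁ u₂).support
  simp only [Walk.support_cons, Walk.support_nil]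
  exact List.mem_cons_of_mem _ List.mem_cons_self

lemma S1_edge [DecidableEq α] (hacyc : T.IsAcyclic) (x y : α) (hadj : T.Adj x y)
    (hx : x ∈ S1 T r u hu) : y ∈ S1 T r u hu ∨ (y = r ∧ x = u) := by
  obtain ⟨hxr, hxc⟩ := hx
  by_cases hyr : y = r
  · right
    refine ⟨hyr, ?_⟩
    rw [hyr] at hadj
    exact neighbor_unique T r hacyc x u hadj.symm hu hxr hu.ne' hxc
  · left
    refine ⟨hyr, ?_⟩
    have hstep : (T.induce {z | z ≠ r}).Adj ⟨x, hxr⟩ ⟨y, hyr⟩ := hadj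
    rw [← hxc]
    exact (SimpleGraph.ConnectedComponent.sound hstep.reachable).symm

lemma S1_connected (hconn : T.Connected) : (T.induce (S1 T r u hu)).Connected := by
  rw [SimpleGraph.connected_iff]
  constructor
  · intro a b
    obtain ⟨ha1, ha2⟩ := a.2
    obtain ⟨hb1, hb2⟩ := b.2
    have hre := SimpleGraph.ConnectedComponent.exact (ha2.trans hb2.symm)
    have w := hre.some
    set wT : T.Walk (a : α) (b : α) := w.map (inclHom T {z | z ≠ r}) with hwT
    have hsupp : ∀ x ∈ wT.support, x ∈ S1 T r u hu := by
      intro x hxmem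
      rw [hwT] at hxmem
      have hxmem' : x ∈ (w.map (inclHom T {z | z ≠ r})).support := hxmem
      rw [Walk.support_map] at hxmem'
      obtain ⟨x', hx'mem, rfl⟩ := List.mem_map.mp hxmem'
      refine ⟨x'.2, ?_⟩
      have hcc := comp_const_on_walk _ w x' hx'mem
      exact hcc.trans ha2
    exact reachable_induce_of_walk T (S1 T r u hu) wT hsupp ⟨ha1, ha2⟩ ⟨hb1, hb2⟩
  · exact ⟨⟨u, u_mem_S1 T r u hu⟩⟩

lemma S2_connected [DecidableEq α] (hconn : T.Connected) :
    (T.induce (S1 T r u hu)ᶜ).Connected := by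
  have hrS2 : r ∈ (S1 T r u hu)ᶜ := r_not_mem_S1 T r u hu
  have hreach : ∀ a : ↥(S1 T r u hu)ᶜ, (T.induce (S1 T r u hu)ᶜ).Reachable a ⟨r, hrS2⟩ := by
    intro a
    by_cases har : (a : α) = r
    · have : a = ⟨r, hrS2⟩ := Subtype.ext har
      rw [this]
    · have hw := (hconn.preconnected (a : α) r).some
      set p := hw.toPath with hp
      have hsupp : ∀ x ∈ (p : T.Walk (a : α) r).support, x ∈ (S1 T r u hu)ᶜ := by
        intro x hxmem
        rcases walk_comp_support T r (p : T.Walk (a : α) r) p.2 x hxmem with rfl | ⟨hxr, hyr, hre⟩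
        · exact hrS2
        · intro hxS1
          apply a.2
          obtain ⟨hx1, hx2⟩ := hxS1
          refine ⟨hyr, ?_⟩
          rw [← hx2]
          exact (SimpleGraph.ConnectedComponent.sound hre).symm
      exact reachable_induce_of_walk T _ (p : T.Walk (a : α) r) hsupp
        (hsupp _ ((p : T.Walk (a : α) r).start_mem_support)) hrS2
  rw [SimpleGraph.connected_iff]
  exact ⟨fun a b => (hreach a).trans (hreach b).symm, ⟨⟨r, hrS2⟩⟩⟩

end Split

section SplitEquiv

open SimpleGraph

noncomputable def splitEquiv {α : Type} [DecidableEq α] (T : SimpleGraph α) (r u : α)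
    (hu : T.Adj r u) (hacyc : T.IsAcyclic) {β : Type*} (G : SimpleGraph β) (v : β) :
    {h : T →g G // h r = v} ≃
      ({h₁ : (T.induce (S1 T r u hu)) →g G // G.Adj v (h₁ ⟨u, u_mem_S1 T r u hu⟩)} ×
       {h₂ : (T.induce (S1 T r u hu)ᶜ) →g G // h₂ ⟨r, r_not_mem_S1 T r u hu⟩ = v}) := by
  classical
  exact
  { toFun := fun h =>
      (⟨h.1.comp (inclHom T (S1 T r u hu)), by
          show G.Adj v (h.1 u)
          have := h.1.map_adj hu
          rwa [h.2] at this⟩,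
       ⟨h.1.comp (inclHom T (S1 T r u hu)ᶜ), h.2⟩)
    invFun := fun P =>
      ⟨{ toFun := fun x => if hx : x ∈ S1 T r u hu then P.1.1 ⟨x, hx⟩ else P.2.1 ⟨x, hx⟩
         map_rel' := by
           intro x y hadj
           by_cases hx : x ∈ S1 T r u hu <;> by_cases hy : y ∈ S1 T r u hu
           · simp only [dif_pos hx, dif_pos hy]
             exact P.1.1.map_adj hadj
           · simp only [dif_pos hx, dif_neg hy]
             rcases S1_edge T r u hu hacyc x y hadj hx with h | ⟨hyr, hxu⟩
             · exact absurd h hy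
             · have h2 : P.2.1 ⟨y, hy⟩ = v := by
                 rw [show (⟨y, hy⟩ : ↥(S1 T r u hu)ᶜ) = ⟨r, r_not_mem_S1 T r u hu⟩
                   from Subtype.ext hyr]
                 exact P.2.2
               have h1 : G.Adj v (P.1.1 ⟨x, hx⟩) := by
                 rw [show (⟨x, hx⟩ : ↥(S1 T r u hu)) = ⟨u, u_mem_S1 T r u hu⟩
                   from Subtype.ext hxu]
                 exact P.1.2
               rw [h2]
               exact h1.symm
           · simp only [dif_neg hx, dif_pos hy]
             rcases S1_edge T r u hu hacyc y x hadj.symm hy with h | ⟨hxr, hyu⟩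
             · exact absurd h hx
             · have h2 : P.2.1 ⟨x, hx⟩ = v := by
                 rw [show (⟨x, hx⟩ : ↥(S1 T r u hu)ᶜ) = ⟨r, r_not_mem_S1 T r u hu⟩
                   from Subtype.ext hxr]
                 exact P.2.2
               have h1 : G.Adj v (P.1.1 ⟨y, hy⟩) := by
                 rw [show (⟨y, hy⟩ : ↥(S1 T r u hu)) = ⟨u, u_mem_S1 T r u hu⟩
                   from Subtype.ext hyu]
                 exact P.1.2
               rw [h2]
               exact h1
           · simp only [dif_neg hx, dif_neg hy]
             exact P.2.1.map_adj hadj },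
       by
         show (if hx : r ∈ S1 T r u hu then P.1.1 ⟨r, hx⟩ else P.2.1 ⟨r, hx⟩) = v
         rw [dif_neg (r_not_mem_S1 T r u hu)]
         exact P.2.2⟩
    left_inv := fun h => by
      apply Subtype.ext
      apply DFunLike.ext
      intro x
      show (if hx : x ∈ S1 T r u hu then h.1 x else h.1 x) = h.1 x
      split <;> rfl
    right_inv := fun P => by
      obtain ⟨⟨h₁, c₁⟩, ⟨h₂, c₂⟩⟩ := P
      refine Prod.ext ?_ ?_
      · apply Subtype.ext
        apply DFunLike.ext
        intro y
        show (if hy : (y : α) ∈ S1 T r u hu then h₁ ⟨y, hy⟩ else h₂ ⟨y, hy⟩) = h₁ y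
        rw [dif_pos y.2]
      · apply Subtype.ext
        apply DFunLike.ext
        intro y
        have hyn : (y : α) ∉ S1 T r u hu := y.2
        show (if hy : (y : α) ∈ S1 T r u hu then h₁ ⟨y, hy⟩ else h₂ ⟨y, hy⟩) = h₂ y
        rw [dif_neg hyn] }

end SplitEquiv

section DecodeMain

open SimpleGraph

lemma decode (N : ℕ) : ∀ (α : Type) [Fintype α] [DecidableEq α]
    (T : SimpleGraph α), Fintype.card α ≤ N → T.Connected → T.IsAcyclic →
    ∀ r : α, ∃ f : RF, ∀ (β : Type) [Fintype β] [DecidableEq β]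
      (G : SimpleGraph β) [DecidableRel G.Adj] (v : β),
      Nat.card {h : T →g G // h r = v} = homF G f v := by
  induction N with
  | zero =>
      intro α _ _ T hcard _ _ r
      have : 0 < Fintype.card α := Fintype.card_pos_iff.mpr ⟨r⟩
      omega
  | succ N ih =>
      intro α instF instD T hcard hconn hacyc r
      classical
      by_cases hnb : ∃ u, T.Adj r u
      case neg =>
        push_neg at hnb
        refine ⟨RF.nil, ?_⟩
        intro β _ _ G _ v
        have hall : ∀ x, x = r := by
          intro x
          have hre := (hconn.preconnected r x).some
          cases hre with
          | nil => rfl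
          | cons h q => exact absurd h (hnb _)
        have hnoedge : ∀ a b : α, ¬T.Adj a b := by
          intro a b hab
          rw [hall a, hall b] at hab
          exact T.loopless.irrefl r hab
        rw [show homF G RF.nil v = 1 from rfl]
        rw [Nat.card_eq_one_iff_unique]
        constructor
        · constructor
          intro h1 h2
          apply Subtype.ext
          apply DFunLike.ext
          intro x
          rw [hall x]
          rw [h1.2, h2.2]
        · exact ⟨⟨⟨fun _ => v, fun {a b} hab => absurd hab (hnoedge a b)⟩, rfl⟩⟩
      case pos =>
        obtain ⟨u, hu⟩ := hnb
        haveI : DecidablePred (· ∈ S1 T r u hu) := fun _ => Classical.dec _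
        haveI : DecidablePred (· ∈ (S1 T r u hu)ᶜ) := fun _ => Classical.dec _
        have hcard1 : Fintype.card ↥(S1 T r u hu) ≤ N := by
          have h1 : Fintype.card {x // x ∈ S1 T r u hu} < Fintype.card α :=
            Fintype.card_subtype_lt (p := (· ∈ S1 T r u hu)) (x := r)
              (r_not_mem_S1 T r u hu)
          have h2 : Fintype.card ↥(S1 T r u hu) = Fintype.card {x // x ∈ S1 T r u hu} :=
            Fintype.card_congr (Equiv.refl _)
          omega
        have hcard2 : Fintype.card ↥((S1 T r u hu)ᶜ) ≤ N := by
          have h1 : Fintype.card {x // x ∈ (S1 T r u hu)ᶜ} < Fintype.card α :=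
            Fintype.card_subtype_lt (p := (· ∈ (S1 T r u hu)ᶜ)) (x := u)
              (by intro h; exact h (u_mem_S1 T r u hu))
          have h2 : Fintype.card ↥((S1 T r u hu)ᶜ) = Fintype.card {x // x ∈ (S1 T r u hu)ᶜ} :=
            Fintype.card_congr (Equiv.refl _)
          omega
        have hacyc1 : (T.induce (S1 T r u hu)).IsAcyclic :=
          isAcyclic_of_injective_hom (inclHom T _) (inclHom_injective T _) hacyc
        have hacyc2 : (T.induce (S1 T r u hu)ᶜ).IsAcyclic :=
          isAcyclic_of_injective_hom (inclHom T _) (inclHom_injective T _) hacyc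
        obtain ⟨f₁, hf₁⟩ := ih ↥(S1 T r u hu) (T.induce _) hcard1
          (S1_connected T r u hu hconn) hacyc1 ⟨u, u_mem_S1 T r u hu⟩
        obtain ⟨f₂, hf₂⟩ := ih ↥((S1 T r u hu)ᶜ) (T.induce _) hcard2
          (S2_connected T r u hu hconn) hacyc2 ⟨r, r_not_mem_S1 T r u hu⟩
        refine ⟨RF.cons f₁ f₂, ?_⟩
        intro β instFβ instDβ G instDR v
        rw [Nat.card_congr (splitEquiv T r u hu hacyc G v), Nat.card_prod]
        have hfib : Nat.card {h₁ : (T.induce (S1 T r u hu)) →g G //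
            G.Adj v (h₁ ⟨u, u_mem_S1 T r u hu⟩)}
            = ∑ w ∈ G.neighborFinset v, homF G f₁ w := by
          set F : {h₁ : (T.induce (S1 T r u hu)) →g G //
              G.Adj v (h₁ ⟨u, u_mem_S1 T r u hu⟩)} → {w : β // G.Adj v w} :=
            fun h => ⟨h.1 ⟨u, u_mem_S1 T r u hu⟩, h.2⟩ with hF
          rw [← Nat.card_congr (Equiv.sigmaFiberEquiv F), Nat.card_sigma']
          have hper : ∀ w : {w : β // G.Adj v w},
              Nat.card {h // F h = w} = homF G f₁ w.1 := by
            intro w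
            have e2 : {h // F h = w} ≃ {h₁ : (T.induce (S1 T r u hu)) →g G //
                h₁ ⟨u, u_mem_S1 T r u hu⟩ = w.1} :=
              { toFun := fun a => ⟨a.1.1, congrArg Subtype.val a.2⟩
                invFun := fun b => ⟨⟨b.1, by rw [b.2]; exact w.2⟩, Subtype.ext b.2⟩
                left_inv := fun a => by apply Subtype.ext; apply Subtype.ext; rfl
                right_inv := fun b => by apply Subtype.ext; rfl }
            rw [Nat.card_congr e2, hf₁ β G w.1]
          rw [Finset.sum_congr rfl (fun w _ => hper w)]
          rw [Finset.sum_subtype (G.neighborFinset v)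
            (fun w => G.mem_neighborFinset v w) (fun w => homF G f₁ w)]
        rw [hfib, hf₂ β G v]
        rfl

end DecodeMain

section IsoTransfer

variable {β β' : Type*} [Fintype β] [Fintype β']
variable (G : SimpleGraph β) (G' : SimpleGraph β')
variable [DecidableRel G.Adj] [DecidableRel G'.Adj]

lemma homF_iso (φ : G ≃g G') : ∀ (f : RF) (v : β), homF G f v = homF G' f (φ v) := by
  intro f
  induction f with
  | nil => intro v; rfl
  | cons t g iht ihg =>
      intro v
      show (∑ u ∈ G.neighborFinset v, homF G t u) * homF G g v
        = (∑ u' ∈ G'.neighborFinset (φ v), homF G' t u') * homF G' g (φ v)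
      rw [ihg v]
      congr 1
      refine Finset.sum_bij' (fun u _ => φ u) (fun u' _ => φ.symm u') ?_ ?_ ?_ ?_ ?_
      · intro u hu
        rw [SimpleGraph.mem_neighborFinset] at hu ⊢
        exact φ.map_rel_iff.mpr hu
      · intro u' hu'
        rw [SimpleGraph.mem_neighborFinset] at hu' ⊢
        have := φ.symm.map_rel_iff.mpr hu'
        rwa [RelIso.symm_apply_apply] at this
      · intro u _
        exact φ.symm_apply_apply u
      · intro u' _
        exact φ.apply_symm_apply u'
      · intro u _
        exact iht u

lemma fiber_card_iso {αT : Type*} (T : SimpleGraph αT) (r : αT) (v : β) (φ : G ≃g G') :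
    Nat.card {h : T →g G // h r = v} = Nat.card {h : T →g G' // h r = φ v} := by
  apply Nat.card_congr
  refine ⟨fun h => ⟨φ.toHom.comp h.1, by show φ (h.1 r) = φ v; rw [h.2]⟩,
    fun h => ⟨φ.symm.toHom.comp h.1, by
      show φ.symm (h.1 r) = v
      rw [h.2, RelIso.symm_apply_apply]⟩, ?_, ?_⟩
  · intro h
    apply Subtype.ext
    apply DFunLike.ext
    intro x
    show φ.symm (φ (h.1 x)) = h.1 x
    rw [RelIso.symm_apply_apply]
  · intro h
    apply Subtype.ext
    apply DFunLike.ext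
    intro x
    show φ (φ.symm (h.1 x)) = h.1 x
    rw [RelIso.apply_symm_apply]

end IsoTransfer


/-- The number of graph homomorphisms from `F` to `G`. -/
noncomputable def homCount {α β : Type*} (F : SimpleGraph α) (G : SimpleGraph β) : ℕ :=
  Nat.card (F →g G)

theorem stmt0 {V W : Type*} [Fintype V] [Fintype W]
    (G : SimpleGraph V) (H : SimpleGraph W)
    [DecidableRel G.Adj] [DecidableRel H.Adj] :
    (∀ (n : ℕ) (T : SimpleGraph (Fin n)), T.IsTree → homCount T G = homCount T H) ↔
    (∃ X : Matrix V W ℝ, (∀ v w, 0 ≤ X v w) ∧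
      G.adjMatrix ℝ * X = X * H.adjMatrix ℝ ∧
      X *ᵥ (fun _ => 1) = (fun _ => 1) ∧
      (fun _ => (1 : ℝ)) ᵥ* X = (fun _ => 1)) := by
  classical
  haveI : DecidableEq V := Classical.decEq V
  haveI : DecidableEq W := Classical.decEq W
  constructor
  · intro hyp
    have hsums := sums_from_trees G H (fun n T hT => hyp n T hT)
    have hcs := eqCS_of_homF_sums G H hsums
    exact fiso_of_eqCS G H hcs
  · rintro ⟨X, h0, hAX, hrow, hcol⟩ n T hT
    have hcs := eqCS_of_fiso (G := G) (H := H) h0 hAX hrow hcol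
    have hsums := homF_sums_of_eqCS G H hcs
    have hne : Nonempty (Fin n) := hT.1.nonempty
    obtain ⟨r⟩ := hne
    obtain ⟨f, hf⟩ := decode n (Fin n) T (by simp) hT.1 hT.2 r
    -- transport G to a graph on `Fin (card V)`
    have hfibG : ∀ v : V, Nat.card {h : T →g G // h r = v} = homF G f v := by
      set eV : V ≃ Fin (Fintype.card V) := Fintype.equivFin V with heV
      set GF : SimpleGraph (Fin (Fintype.card V)) := SimpleGraph.comap eV.symm G with hGF
      have φ : G ≃g GF :=
        { toEquiv := eV
          map_rel_iff' := by
            intro a b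
            show G.Adj (eV.symm (eV a)) (eV.symm (eV b)) ↔ G.Adj a b
            rw [Equiv.symm_apply_apply, Equiv.symm_apply_apply] }
      haveI : DecidableRel GF.Adj := fun a b => Classical.dec _
      intro v
      rw [fiber_card_iso G GF T r v φ, homF_iso G GF φ f v]
      exact hf (Fin (Fintype.card V)) GF (φ v)
    have hfibH : ∀ w : W, Nat.card {h : T →g H // h r = w} = homF H f w := by
      set eW : W ≃ Fin (Fintype.card W) := Fintype.equivFin W with heW
      set HF : SimpleGraph (Fin (Fintype.card W)) := SimpleGraph.comap eW.symm H with hHF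
      have φ : H ≃g HF :=
        { toEquiv := eW
          map_rel_iff' := by
            intro a b
            show H.Adj (eW.symm (eW a)) (eW.symm (eW b)) ↔ H.Adj a b
            rw [Equiv.symm_apply_apply, Equiv.symm_apply_apply] }
      haveI : DecidableRel HF.Adj := fun a b => Classical.dec _
      intro w
      rw [fiber_card_iso H HF T r w φ, homF_iso H HF φ f w]
      exact hf (Fin (Fintype.card W)) HF (φ w)
    have hG : homCount T G = ∑ v : V, homF G f v := by
      unfold homCount
      rw [← Nat.card_congr (Equiv.sigmaFiberEquiv (fun h : T →g G => h r)), Nat.card_sigma']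
      exact Finset.sum_congr rfl (fun v _ => hfibG v)
    have hH : homCount T H = ∑ w : W, homF H f w := by
      unfold homCount
      rw [← Nat.card_congr (Equiv.sigmaFiberEquiv (fun h : T →g H => h r)), Nat.card_sigma']
      exact Finset.sum_congr rfl (fun w _ => hfibH w)
    rw [hG, hH]
    exact hsums f
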